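/- arXiv:math/0409532 — 5 statements merged into one kernel-verified Lean document; each statement's English description precedes it below -/
import Mathlib

section
/- (Inclusion Lemma) Let U and V be 𝔽_p[G]-submodules of an 𝔽_p[G]-module W. Suppose that (U+V)^G ⊆ U and that for each w ∈ (U+V) ∖ (U+V)^G there exists u ∈ U such that (σ-1)^{l(w)-1}(w) = N(u). Then V ⊆ U. -/
open Submodule Module

/-- Auxiliary: if the algebra `R` is spanned over `K` by powers of `σR`, `τ = σR - 1`,
and `τ ^ k • x = 0`, then the `R`-span of `x` equals the `K`-span of `τ^i • x`, `i < k`. -/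
lemma aux_span_6 {K : Type} [Field K] {R : Type} [CommRing R] [Algebra K R]
    {W : Type} [AddCommGroup W] [DecidableEq W] [Module R W] [Module K W]
    [IsScalarTower K R W]
    (σR : R) (hgen : ∀ r : R, r ∈ Submodule.span K (Set.range fun m : ℕ => σR ^ m))
    (τ : R) (hτ : τ = σR - 1) (x : W) (k : ℕ) (hk : τ ^ k • x = 0) :
    (Submodule.span R {x}).restrictScalars K =
      Submodule.span K (((Finset.range k).image fun i => τ ^ i • x : Finset W) : Set W) := by
  set S : Submodule K W :=
    Submodule.span K (((Finset.range k).image fun i => τ ^ i • x : Finset W) : Set W) with hS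
  have claim0 : ∀ i : ℕ, τ ^ i • x ∈ S := by
    intro i
    by_cases hik : i < k
    · exact Submodule.subset_span (by
        simp only [Finset.coe_image, Set.mem_image, Finset.mem_coe, Finset.mem_range]
        exact ⟨i, hik, rfl⟩)
    · have : τ ^ i • x = 0 := by
        have hi : i = (i - k) + k := by omega
        rw [hi, pow_add, mul_smul, hk, smul_zero]
      rw [this]; exact S.zero_mem
  have claim2 : ∀ m i : ℕ, (σR ^ m * τ ^ i) • x ∈ S := by
    intro m
    induction m with
    | zero => intro i; simpa using claim0 i
    | succ m ih =>
      intro i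
      have hdec : σR ^ (m + 1) * τ ^ i = σR ^ m * τ ^ (i + 1) + σR ^ m * τ ^ i := by
        rw [hτ]; ring
      rw [hdec, add_smul]
      exact S.add_mem (ih (i + 1)) (ih i)
  apply le_antisymm
  · intro y hy
    rw [Submodule.restrictScalars_mem, Submodule.mem_span_singleton] at hy
    obtain ⟨r, rfl⟩ := hy
    refine Submodule.span_induction (p := fun r _ => r • x ∈ S) ?_ ?_ ?_ ?_ (hgen r)
    · rintro _ ⟨m, rfl⟩
      simpa using claim2 m 0
    · show (0 : R) • x ∈ S; rw [zero_smul]; exact S.zero_mem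
    · intro a b _ _ ha hb; show (a + b) • x ∈ S; rw [add_smul]; exact S.add_mem ha hb
    · intro c a _ ha; show (c • a) • x ∈ S; rw [smul_assoc]; exact S.smul_mem c ha
  · rw [hS, Submodule.span_le]
    intro y hy
    simp only [Finset.coe_image, Set.mem_image, Finset.mem_coe, Finset.mem_range] at hy
    obtain ⟨i, _, rfl⟩ := hy
    exact Submodule.smul_mem _ _ (Submodule.mem_span_singleton_self x)

/-- **Inclusion Lemma.** Let `G` be cyclic of order `p^n` with generator `σ`, and let
`U`, `V` be `𝔽_p[G]`-submodules of `W`.  If `(U+V)^G ⊆ U` and for each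
`w ∈ (U+V) \\ (U+V)^G` there is `u ∈ U` with `(σ-1)^{l(w)-1} w = N u`, then `V ⊆ U`. -/
theorem statement_6
    (p n : ℕ) (hp : p.Prime) (hn : 1 ≤ n)
    (G : Type) [CommGroup G] (σ : G)
    (hσ : ∀ g : G, g ∈ Subgroup.zpowers σ) (hG : Nat.card G = p ^ n)
    (W : Type) [AddCommGroup W] [Module (MonoidAlgebra (ZMod p) G) W]
    [Module (ZMod p) W] [IsScalarTower (ZMod p) (MonoidAlgebra (ZMod p) G) W]
    (U V : Submodule (MonoidAlgebra (ZMod p) G) W)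
    (hfix : ∀ x ∈ U ⊔ V, (∀ g : G, MonoidAlgebra.of (ZMod p) G g • x = x) → x ∈ U)
    (hnorm : ∀ w ∈ U ⊔ V, ¬ (∀ g : G, MonoidAlgebra.of (ZMod p) G g • w = w) →
      ∃ u ∈ U,
        (MonoidAlgebra.of (ZMod p) G σ - 1) ^
            (Module.finrank (ZMod p)
              (Submodule.span (MonoidAlgebra (ZMod p) G) {w}) - 1) • w =
          (MonoidAlgebra.of (ZMod p) G σ - 1) ^ (p ^ n - 1) • u) :
    V ≤ U := by
  classical
  haveI : Fact p.Prime := ⟨hp⟩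
  set R := MonoidAlgebra (ZMod p) G with hR
  set τ : R := MonoidAlgebra.of (ZMod p) G σ - 1 with hτdef
  haveI : Finite G := Nat.finite_of_card_ne_zero (by
    rw [hG]; exact pow_ne_zero _ hp.ne_zero)
  haveI : Fintype G := Fintype.ofFinite G
  -- char p
  haveI : CharP R p := charP_of_injective_algebraMap
    (algebraMap (ZMod p) R).injective p
  -- τ ^ p^n = 0
  have hσpn : σ ^ p ^ n = 1 := by rw [← hG]; exact pow_card_eq_one'
  have hτpn : τ ^ p ^ n = 0 := by
    rw [hτdef, sub_pow_char_pow, ← map_pow, hσpn, one_pow, map_one, sub_self]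
  -- every element of R is in the K-span of powers of (of σ)
  have hgen : ∀ r : R,
      r ∈ Submodule.span (ZMod p) (Set.range fun m : ℕ =>
        (MonoidAlgebra.of (ZMod p) G σ) ^ m) := by
    intro r
    refine MonoidAlgebra.induction_on r ?_ ?_ ?_
    · intro g
      obtain ⟨m, rfl⟩ := mem_powers_iff_mem_zpowers.mpr (hσ g)
      exact Submodule.subset_span ⟨m, by rw [map_pow]⟩
    · intro f g hf hg; exact Submodule.add_mem _ hf hg
    · intro c f hf; exact Submodule.smul_mem _ c hf
  -- key finrank bound
  have key : ∀ (x : W) (k : ℕ), τ ^ k • x = 0 →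
      Module.finrank (ZMod p) (Submodule.span R {x}) ≤ k ∧
        Module.Finite (ZMod p) (Submodule.span R {x}) := by
    intro x k hk
    have e := aux_span_6 (K := ZMod p) (MonoidAlgebra.of (ZMod p) G σ) hgen τ rfl x k hk
    have equiv : ((Submodule.span R {x}).restrictScalars (ZMod p)) ≃ₗ[ZMod p]
        (Submodule.span R {x}) :=
      (Submodule.restrictScalarsEquiv (ZMod p) R W (Submodule.span R {x})).restrictScalars
        (ZMod p)
    constructor
    · calc Module.finrank (ZMod p) (Submodule.span R {x})
          = Module.finrank (ZMod p) ((Submodule.span R {x}).restrictScalars (ZMod p)) :=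
            (LinearEquiv.finrank_eq equiv).symm
        _ ≤ ((Finset.range k).image fun i => τ ^ i • x).card := by
            rw [e]; exact finrank_span_finset_le_card _
        _ ≤ k := le_trans Finset.card_image_le (by simp)
    · have : Module.Finite (ZMod p) ((Submodule.span R {x}).restrictScalars (ZMod p)) := by
        rw [e]; exact FiniteDimensional.span_finset (ZMod p) _
      exact Module.Finite.equiv equiv
  -- main induction
  have main : ∀ k : ℕ, ∀ w ∈ U ⊔ V,
      Module.finrank (ZMod p) (Submodule.span R {w}) ≤ k → w ∈ U := by
    intro k
    induction k with
    | zero =>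
      intro w hw hl
      by_cases hfx : ∀ g : G, MonoidAlgebra.of (ZMod p) G g • w = w
      · exact hfix w hw hfx
      · exfalso
        have hw0 : w ≠ 0 := by
          rintro rfl; exact hfx fun g => smul_zero _
        obtain ⟨-, hfin⟩ := key w (p ^ n) (by rw [hτpn, zero_smul])
        haveI := hfin
        have : Nontrivial (Submodule.span R {w}) :=
          ⟨⟨⟨w, Submodule.mem_span_singleton_self w⟩, 0, by
            intro h
            exact hw0 (by simpa using congrArg Subtype.val h)⟩⟩
        have := (Module.finrank_pos_iff (R := ZMod p)
          (M := Submodule.span R {w})).mpr this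
        omega
    | succ k ih =>
      intro w hw hl
      by_cases hfx : ∀ g : G, MonoidAlgebra.of (ZMod p) G g • w = w
      · exact hfix w hw hfx
      · set l := Module.finrank (ZMod p) (Submodule.span R {w}) with hl_def
        have hw0 : w ≠ 0 := by
          rintro rfl; exact hfx fun g => smul_zero _
        obtain ⟨hle, hfin⟩ := key w (p ^ n) (by rw [hτpn, zero_smul])
        haveI := hfin
        have hl1 : 1 ≤ l := by
          have : Nontrivial (Submodule.span R {w}) :=
            ⟨⟨⟨w, Submodule.mem_span_singleton_self w⟩, 0, by
              intro h
              exact hw0 (by simpa using congrArg Subtype.val h)⟩⟩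
          exact (Module.finrank_pos_iff (R := ZMod p)
            (M := Submodule.span R {w})).mpr this
        obtain ⟨u, hu, hequ⟩ := hnorm w hw hfx
        set w' : W := w - τ ^ (p ^ n - l) • u with hw'def
        have hw'mem : w' ∈ U ⊔ V :=
          Submodule.sub_mem _ hw ((le_sup_left : U ≤ U ⊔ V) (U.smul_mem _ hu))
        have hτw' : τ ^ (l - 1) • w' = 0 := by
          rw [hw'def, smul_sub, ← mul_smul, ← pow_add]
          have harith : (l - 1) + (p ^ n - l) = p ^ n - 1 := by
            have hpn : 1 ≤ p ^ n := Nat.one_le_pow _ _ hp.pos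
            omega
          rw [harith, hequ, sub_self]
        have hl' : Module.finrank (ZMod p) (Submodule.span R {w'}) ≤ k := by
          obtain ⟨h1, -⟩ := key w' (l - 1) hτw'
          omega
        have hw'U : w' ∈ U := ih w' hw'mem hl'
        have : w = w' + τ ^ (p ^ n - l) • u := by rw [hw'def]; abel
        rw [this]
        exact U.add_mem hw'U (U.smul_mem _ hu)
  intro v hv
  exact main _ v (le_sup_right (α := Submodule R W) hv) le_rfl
end

section
/- (Free Complement Lemma) Let V ⊆ U be 𝔽_p[G]-modules, with both V and U free as 𝔽_p[G]-modules (of possibly infinite rank). Then there exists a free 𝔽_p[G]-submodule Ṽ of U such that U = V ⊕ Ṽ. -/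
open Polynomial

section LemmaA
variable {R : Type} [CommRing R] [Nontrivial R]

/-- Freeness criterion over a "chain ring": if `t^m = 0`, every nonzero element of `R` is a
unit times a power of `t`, and `ker (t^(m-1) • ·) ⊆ t • M`, then `M` is free. -/
theorem free_of_ker_pow {t : R} {m : ℕ} (hm1 : 1 ≤ m) (htm : t ^ m = 0)
    (hrep : ∀ r : R, r ≠ 0 → ∃ i u, i < m ∧ IsUnit u ∧ r = u * t ^ i)
    (M : Type) [AddCommGroup M] [Module R M]
    (hker : ∀ x : M, t ^ (m - 1) • x = 0 → ∃ y : M, x = t • y) :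
    Module.Free R M := by
  classical
  have htunit : ¬ IsUnit t := by
    intro h
    obtain ⟨u, hu⟩ := h.exists_right_inv
    have : (1 : R) = 0 := by
      have := congrArg (· * u ^ m) htm
      simpa [mul_pow, ← mul_pow, hu] using this.symm
    exact one_ne_zero this
  set I : Ideal R := Ideal.span {t} with hI
  have htI : t ∈ I := Ideal.subset_span rfl
  have hInetop : I ≠ ⊤ := by
    intro h
    have : IsUnit t := by
      rw [hI] at h
      exact (Ideal.span_singleton_eq_top).mp h
    exact htunit this
  haveI : Nontrivial (R ⧸ I) := Ideal.Quotient.nontrivial_iff.mpr hInetop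
  -- `R ⧸ I` is a field
  letI : Field (R ⧸ I) := by
    refine IsField.toField ⟨exists_pair_ne _, mul_comm, ?_⟩
    intro a ha
    obtain ⟨r, rfl⟩ := Ideal.Quotient.mk_surjective a
    have hrI : r ∉ I := by
      intro h
      exact ha ((Ideal.Quotient.eq_zero_iff_mem).mpr h)
    have hr0 : r ≠ 0 := by rintro rfl; exact hrI (zero_mem I)
    obtain ⟨i, u, hi, hu, heq⟩ := hrep r hr0
    rcases Nat.eq_zero_or_pos i with hi0 | hipos
    · subst hi0
      have : IsUnit r := by rw [heq, pow_zero, mul_one]; exact hu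
      obtain ⟨v, hv⟩ := this.exists_right_inv
      exact ⟨Ideal.Quotient.mk I v, by rw [← map_mul, hv, map_one]⟩
    · exfalso
      apply hrI
      rw [heq, hI]
      exact Ideal.mul_mem_left _ u (Ideal.pow_mem_of_mem _ htI _ hipos)
  -- the quotient module `Q := M ⧸ I•⊤` as a vector space over `R ⧸ I`
  set N : Submodule R M := I • (⊤ : Submodule R M) with hN
  set mkq : M →ₗ[R] M ⧸ N := N.mkQ with hmkq
  have hNt : ∀ z ∈ N, ∃ w : M, z = t • w := by
    intro z hz
    have hle : N ≤ LinearMap.range (LinearMap.lsmul R M t) := by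
      rw [hN]
      refine Submodule.smul_le.mpr ?_
      intro r hr nn _
      obtain ⟨c, rfl⟩ := Ideal.mem_span_singleton'.mp (hI ▸ hr)
      exact ⟨c • nn, by simp [mul_smul, smul_comm t c nn]⟩
    obtain ⟨w, hw⟩ := hle hz
    exact ⟨w, by simpa using hw.symm⟩
  have hmk_smul : ∀ (r : R) (z : M),
      (Ideal.Quotient.mk I r) • (mkq z) = mkq (r • z) := fun r z => rfl
  -- choose a basis of the quotient and lift it
  obtain ⟨ι, b⟩ := (Module.Free.of_divisionRing (R ⧸ I) (M ⧸ N)).exists_basis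
  have hx : ∀ i : ι, ∃ z : M, mkq z = b i := fun i => N.mkQ_surjective (b i)
  choose x hxspec using hx
  -- units don't die in the quotient
  have hmku : ∀ u : R, IsUnit u → Ideal.Quotient.mk I u ≠ 0 := by
    intro u hu h
    have huI : u ∈ I := (Ideal.Quotient.eq_zero_iff_mem).mp h
    obtain ⟨c, rfl⟩ := Ideal.mem_span_singleton'.mp (hI ▸ huI)
    exact htunit (isUnit_of_mul_isUnit_right hu)
  -- spanning
  have hspan : ⊤ ≤ Submodule.span R (Set.range x) := by
    set S : Submodule R M := Submodule.span R (Set.range x) with hS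
    have hmapS : Submodule.map mkq S = ⊤ := by
      rw [eq_top_iff]
      rintro z -
      have hz : z ∈ Submodule.span (R ⧸ I) (Set.range ⇑b) := by
        rw [b.span_eq]; trivial
      refine Submodule.span_induction ?_ ?_ ?_ ?_ hz
      · rintro _ ⟨i, rfl⟩
        exact ⟨x i, Submodule.subset_span ⟨i, rfl⟩, hxspec i⟩
      · exact Submodule.zero_mem _
      · intro a bb _ _ ha hb; exact Submodule.add_mem _ ha hb
      · rintro c z _ ⟨w, hw, rfl⟩
        obtain ⟨r, rfl⟩ := Ideal.Quotient.mk_surjective c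
        exact ⟨r • w, Submodule.smul_mem _ _ hw, (hmk_smul r w).symm⟩
    have hSN : S ⊔ N = ⊤ := by
      have := congrArg (Submodule.comap mkq) hmapS
      rwa [Submodule.comap_map_eq, hmkq, Submodule.ker_mkQ, Submodule.comap_top] at this
    -- now kill `N` using nilpotency of `t`
    set f : M →ₗ[R] M := LinearMap.lsmul R M t with hf
    have hfpow : ∀ (k : ℕ) (z : M), (f ^ k) z = t ^ k • z := by
      intro k
      induction k with
      | zero => intro z; simp
      | succ k ih =>
        intro z
        rw [pow_succ, Module.End.mul_apply, ih (f z), hf]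
        simp only [LinearMap.lsmul_apply, smul_smul]
        rw [pow_succ]
    have hNle : N ≤ Submodule.map f ⊤ := by
      intro z hz
      obtain ⟨w, rfl⟩ := hNt z hz
      exact ⟨w, trivial, rfl⟩
    have hmain : ∀ k : ℕ, (⊤ : Submodule R M) ≤ S ⊔ Submodule.map (f ^ k) ⊤ := by
      intro k
      induction k with
      | zero =>
        rw [pow_zero, Module.End.one_eq_id, Submodule.map_id]
        exact le_sup_right
      | succ k ih =>
        refine le_trans ih (sup_le le_sup_left ?_)
        have h1 : Submodule.map (f ^ k) ⊤ ≤ Submodule.map (f ^ k) (S ⊔ N) := by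
          rw [hSN]
        refine le_trans h1 ?_
        rw [Submodule.map_sup]
        refine sup_le ?_ ?_
        · refine le_trans ?_ (le_sup_left : S ≤ _)
          intro z hz
          obtain ⟨w, hw, rfl⟩ := hz
          rw [hfpow k w]
          exact Submodule.smul_mem _ _ hw
        · refine le_trans (Submodule.map_mono hNle) ?_
          rw [← Submodule.map_comp]
          refine le_trans ?_ (le_sup_right : _ ≤ S ⊔ _)
          intro z hz
          obtain ⟨w, -, rfl⟩ := hz
          refine ⟨w, trivial, ?_⟩
          rw [pow_succ, Module.End.mul_apply]
          rfl
    have hm' := hmain m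
    have hzero : Submodule.map (f ^ m) (⊤ : Submodule R M) = ⊥ := by
      rw [eq_bot_iff]
      rintro z ⟨w, -, rfl⟩
      rw [Submodule.mem_bot, hfpow m w, htm, zero_smul]
    rw [hzero, sup_bot_eq] at hm'
    exact hm'
  -- linear independence
  have hli : LinearIndependent R x := by
    rw [linearIndependent_iff']
    intro s g hsum
    by_contra hcon
    push_neg at hcon
    obtain ⟨i₀, hi₀s, hgi₀⟩ := hcon
    have hrep' : ∀ α, g α ≠ 0 → ∃ iu : ℕ × R, iu.1 < m ∧ IsUnit iu.2 ∧ g α = iu.2 * t ^ iu.1 := by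
      intro α h
      obtain ⟨i, u, h1, h2, h3⟩ := hrep (g α) h
      exact ⟨⟨i, u⟩, h1, h2, h3⟩
    set v : ι → ℕ := fun α => if h : g α ≠ 0 then ((hrep' α h).choose).1 else 0 with hv
    set u : ι → R := fun α => if h : g α ≠ 0 then ((hrep' α h).choose).2 else 1 with hu
    have hspec : ∀ α, g α ≠ 0 → v α < m ∧ IsUnit (u α) ∧ g α = u α * t ^ (v α) := by
      intro α h
      have := (hrep' α h).choose_spec
      simp only [hv, hu, dif_pos h]
      exact this
    set sne := s.filter (fun α => g α ≠ 0) with hsne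
    have hne : sne.Nonempty := ⟨i₀, by simp [hsne, hi₀s, hgi₀]⟩
    set iv := sne.inf' hne v with hiv
    have hivlt : iv < m := by
      obtain ⟨α, hα, hval⟩ := Finset.exists_mem_eq_inf' hne v
      have hgα : g α ≠ 0 := (Finset.mem_filter.mp hα).2
      rw [hiv, hval]
      exact (hspec α hgα).1
    set J := sne.filter (fun α => v α = iv) with hJ
    have hJne : J.Nonempty := by
      obtain ⟨α, hα, hval⟩ := Finset.exists_mem_eq_inf' hne v
      exact ⟨α, by simp [hJ, hα, hval.symm, hiv]⟩
    have hkey : t ^ (m - 1) • (∑ α ∈ J, u α • x α) = 0 := by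
      have h1 : t ^ (m - 1 - iv) • (∑ α ∈ s, g α • x α) = 0 := by rw [hsum, smul_zero]
      rw [Finset.smul_sum] at h1
      have h2 : ∀ α ∈ s, t ^ (m - 1 - iv) • g α • x α =
          (if α ∈ J then t ^ (m-1) • (u α • x α) else 0) := by
        intro α hα
        by_cases hgα : g α ≠ 0
        · have hαsne : α ∈ sne := Finset.mem_filter.mpr ⟨hα, hgα⟩
          obtain ⟨hvlt, huα, heqα⟩ := hspec α hgα
          by_cases hαJ : α ∈ J
          · rw [if_pos hαJ]
            have hvα : v α = iv := (Finset.mem_filter.mp hαJ).2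
            have e : ∀ aa bb : ℕ, aa + iv = bb →
                t ^ aa * (u α * t ^ iv) = t ^ bb * u α := by
              rintro aa bb rfl; rw [pow_add]; ring
            rw [heqα, hvα, smul_smul, smul_smul,
              e (m - 1 - iv) (m - 1) (by omega)]
          · rw [if_neg hαJ]
            have hvα : v α ≠ iv := by
              intro h; exact hαJ (Finset.mem_filter.mpr ⟨hαsne, h⟩)
            have hvge : iv ≤ v α := Finset.inf'_le v hαsne
            have hvgt : iv < v α := lt_of_le_of_ne hvge (Ne.symm hvα)
            have hge : m ≤ (m - 1 - iv) + v α := by omega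
            have hz0 : t ^ ((m - 1 - iv) + v α) = 0 := by
              obtain ⟨c, hc⟩ := pow_dvd_pow t hge
              rw [hc, htm, zero_mul]
            have e : t ^ (m - 1 - iv) * (u α * t ^ v α) =
                u α * t ^ ((m - 1 - iv) + v α) := by
              rw [pow_add]; ring
            rw [heqα, smul_smul, e, hz0, mul_zero, zero_smul]
        · push_neg at hgα
          rw [hgα, zero_smul, smul_zero]
          by_cases hαJ : α ∈ J
          · exact absurd ((Finset.mem_filter.mp ((Finset.mem_filter.mp hαJ).1)).2)
              (by simp [hgα])
          · rw [if_neg hαJ]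
      rw [Finset.sum_congr rfl h2, Finset.sum_ite_mem] at h1
      have hJs : s ∩ J = J := by
        apply Finset.inter_eq_right.mpr
        intro α hα
        exact (Finset.mem_filter.mp ((Finset.mem_filter.mp hα).1)).1
      rw [hJs] at h1
      calc t ^ (m - 1) • ∑ α ∈ J, u α • x α
          = ∑ α ∈ J, t ^ (m - 1) • u α • x α := Finset.smul_sum
        _ = 0 := h1
    obtain ⟨w, hw⟩ := hker _ hkey
    have hquot : ∑ α ∈ J, (Ideal.Quotient.mk I (u α)) • b α = 0 := by
      have hq0 : mkq (∑ α ∈ J, u α • x α) = 0 := by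
        rw [hw]
        have hmem : t • w ∈ N := Submodule.smul_mem_smul htI trivial
        simpa [hmkq] using (Submodule.Quotient.mk_eq_zero N).mpr hmem
      rw [map_sum] at hq0
      rw [← hq0]
      refine Finset.sum_congr rfl ?_
      intro α hα
      rw [← hxspec α, hmk_smul]
    have hzero := linearIndependent_iff'.mp b.linearIndependent J
      (fun α => Ideal.Quotient.mk I (u α)) hquot
    obtain ⟨α₀, hα₀⟩ := hJne
    have hgα₀ : g α₀ ≠ 0 := (Finset.mem_filter.mp ((Finset.mem_filter.mp hα₀).1)).2
    exact hmku _ (hspec α₀ hgα₀).2.1 (hzero α₀ hα₀)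
  exact Module.Free.of_basis (Module.Basis.mk hli hspan)

end LemmaA

open Polynomial

section RingFacts
variable {A B : Type} [CommRing A] [IsDomain A] [IsPrincipalIdealRing A]
  [CommRing B] (φ : A →+* B)
  {q : A} {j : ℕ}

theorem mem_ker_iff' (hker : RingHom.ker φ = Ideal.span {q ^ j}) : ∀ C, φ C = 0 ↔ q ^ j ∣ C := fun C => by
  rw [← RingHom.mem_ker, hker, Ideal.mem_span_singleton]

theorem div_lem (hsurj : Function.Surjective φ) (hq : Prime q) (hker : RingHom.ker φ = Ideal.span {q ^ j}) (hj : 1 ≤ j) (b : B) (hb : φ q ^ (j - 1) * b = 0) : ∃ r, b = φ q * r := by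
  obtain ⟨Bp, rfl⟩ := hsurj b
  have h0 : φ (q ^ (j - 1) * Bp) = 0 := by rw [map_mul, map_pow]; exact hb
  have hdvd : q ^ j ∣ q ^ (j - 1) * Bp := (mem_ker_iff' φ hker _).mp h0
  have hq1 : q ^ j = q ^ (j - 1) * q := by rw [← pow_succ]; congr 1; omega
  rw [hq1] at hdvd
  have h2 := (mul_dvd_mul_iff_left (a := q ^ (j - 1))
    (pow_ne_zero _ hq.ne_zero)).mp hdvd
  obtain ⟨B1, rfl⟩ := h2
  exact ⟨φ B1, by rw [map_mul]⟩

theorem star_lem (hsurj : Function.Surjective φ) (hq : Prime q) (hker : RingHom.ker φ = Ideal.span {q ^ j}) (a b : B) (h : ∀ c, c * a = 0 → c * b = 0) : ∃ r, b = r * a := by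
  obtain ⟨Ap, rfl⟩ := hsurj a
  obtain ⟨Bp, rfl⟩ := hsurj b
  by_cases hA : q ^ j ∣ Ap
  · have ha0 : φ Ap = 0 := (mem_ker_iff' φ hker _).mpr hA
    have hb0 := h 1 (by rw [one_mul, ha0])
    rw [one_mul] at hb0
    exact ⟨0, by rw [hb0, zero_mul]⟩
  · have hA0 : Ap ≠ 0 := by rintro rfl; exact hA (dvd_zero _)
    obtain ⟨i, A1, hA1, hAeq⟩ := WfDvdMonoid.max_power_factor hA0 hq.irreducible
    have hij : i < j := by
      by_contra hcon
      push_neg at hcon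
      exact hA (hAeq ▸ Dvd.dvd.mul_right (pow_dvd_pow q hcon) A1)
    have hc0 : φ (q ^ (j - i)) * φ Ap = 0 := by
      rw [← map_mul]
      refine (mem_ker_iff' φ hker _).mpr ?_
      rw [hAeq, ← mul_assoc, ← pow_add]
      exact Dvd.dvd.mul_right (pow_dvd_pow q (by omega)) A1
    have hcb := h _ hc0
    rw [← map_mul] at hcb
    have hdvd : q ^ j ∣ q ^ (j - i) * Bp := (mem_ker_iff' φ hker _).mp hcb
    have hq1 : q ^ j = q ^ (j - i) * q ^ i := by rw [← pow_add]; congr 1; omega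
    rw [hq1] at hdvd
    have h2 := (mul_dvd_mul_iff_left (a := q ^ (j - i))
      (pow_ne_zero _ hq.ne_zero)).mp hdvd
    obtain ⟨B1, hBeq⟩ := h2
    have hcop : IsCoprime (q ^ j) A1 :=
      (hq.irreducible.coprime_iff_not_dvd.mpr hA1).pow_left
    obtain ⟨S, T, hST⟩ := hcop
    refine ⟨φ (B1 * T), ?_⟩
    have key : Bp = B1 * T * Ap + q ^ i * B1 * S * q ^ j := by
      calc Bp = q ^ i * B1 * (S * q ^ j + T * A1) := by rw [hST, mul_one, hBeq]
        _ = B1 * T * (q ^ i * A1) + q ^ i * B1 * S * q ^ j := by ring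
        _ = B1 * T * Ap + q ^ i * B1 * S * q ^ j := by rw [← hAeq]
    have hz : φ (q ^ i * B1 * S * q ^ j) = 0 :=
      (mem_ker_iff' φ hker _).mpr (dvd_mul_left _ _)
    rw [key, map_add, map_mul, hz, add_zero, map_mul]

theorem rep_lem (hsurj : Function.Surjective φ) (hq : Prime q) (hker : RingHom.ker φ = Ideal.span {q ^ j}) (r : B) (hr : r ≠ 0) :
    ∃ i u, i < j ∧ IsUnit u ∧ r = u * (φ q) ^ i := by
  obtain ⟨C, rfl⟩ := hsurj r
  have hC0 : C ≠ 0 := by rintro rfl; exact hr (map_zero φ)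
  obtain ⟨i, C1, hC1, hCeq⟩ := WfDvdMonoid.max_power_factor hC0 hq.irreducible
  have hij : i < j := by
    by_contra hcon
    push_neg at hcon
    exact hr ((mem_ker_iff' φ hker _).mpr
      (hCeq ▸ Dvd.dvd.mul_right (pow_dvd_pow q hcon) C1))
  have hcop : IsCoprime (q ^ j) C1 :=
    (hq.irreducible.coprime_iff_not_dvd.mpr hC1).pow_left
  obtain ⟨S, T, hST⟩ := hcop
  have hqj0 : φ (q ^ j) = 0 := (mem_ker_iff' φ hker _).mpr dvd_rfl
  have hunit : IsUnit (φ C1) := by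
    refine IsUnit.of_mul_eq_one (φ T) ?_
    have h1 := congrArg φ hST
    rw [map_add, map_mul, map_mul, hqj0, mul_zero, zero_add, map_one] at h1
    rw [mul_comm]; exact h1
  exact ⟨i, φ C1, hij, hunit, by rw [hCeq, map_mul, map_pow, mul_comm]⟩

end RingFacts

section BaerFacts

theorem baer_of_free' {R : Type} [CommRing R] [IsPrincipalIdealRing R]
    (hstar : ∀ a b : R, (∀ c : R, c * a = 0 → c * b = 0) → ∃ r, b = r * a)
    (M : Type) [AddCommGroup M] [Module R M] [Module.Free R M] : Module.Baer R M := by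
  classical
  intro I f
  haveI hIp : I.IsPrincipal := IsPrincipalIdealRing.principal I
  set e := Module.Free.chooseBasis R M with he
  set a := Submodule.IsPrincipal.generator I with ha
  have haI : a ∈ I := Submodule.IsPrincipal.generator_mem I
  set v := e.repr (f ⟨a, haI⟩) with hv
  have hann : ∀ c : R, c * a = 0 → ∀ i, c * v i = 0 := by
    intro c hc i
    have h0 : c • (⟨a, haI⟩ : I) = 0 := by
      apply Subtype.ext
      simpa using hc
    have h2 : c • f ⟨a, haI⟩ = 0 := by rw [← map_smul, h0, map_zero]
    have h1 : c • v = 0 := by rw [hv, ← map_smul, h2, map_zero]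
    calc c * v i = (c • v) i := by rw [Finsupp.smul_apply, smul_eq_mul]
      _ = 0 := by rw [h1]; rfl
  have hrch : ∃ rch : R → R, rch 0 = 0 ∧
      ∀ b : R, (∀ c, c * a = 0 → c * b = 0) → b = rch b * a := by
    refine ⟨fun b => if hb : b = 0 then 0 else
      if h : ∀ c, c * a = 0 → c * b = 0 then (hstar a b h).choose else 0, by simp, ?_⟩
    intro b hb
    by_cases h0 : b = 0
    · simp [h0]
    · simp only [dif_neg h0, dif_pos hb]
      exact (hstar a b hb).choose_spec
  obtain ⟨rch, hrch0, hrchspec⟩ := hrch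
  set m0 := e.repr.symm (v.mapRange rch hrch0) with hm0
  have hmain : a • m0 = f ⟨a, haI⟩ := by
    apply e.repr.injective
    rw [hm0, map_smul, LinearEquiv.apply_symm_apply, ← hv]
    ext i
    rw [Finsupp.smul_apply, Finsupp.mapRange_apply, smul_eq_mul]
    have h3 := hrchspec (v i) (fun c hc => hann c hc i)
    rw [mul_comm]; exact h3.symm
  refine ⟨LinearMap.toSpanSingleton R M m0, ?_⟩
  intro x hx
  have hx' : x ∈ Ideal.span {a} := by
    rw [ha, Ideal.span_singleton_generator]; exact hx
  obtain ⟨c, hc⟩ := Ideal.mem_span_singleton'.mp hx'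
  have hxc : (⟨x, hx⟩ : I) = c • ⟨a, haI⟩ := by
    apply Subtype.ext
    simp [← hc, smul_eq_mul]
  rw [LinearMap.toSpanSingleton_apply, hxc, map_smul, ← hmain, smul_smul, ← hc]

theorem ker_smul_free' {R : Type} [CommRing R] {t s : R}
    (hdiv : ∀ b : R, s * b = 0 → ∃ r, b = t * r)
    (M : Type) [AddCommGroup M] [Module R M] [Module.Free R M] :
    ∀ x : M, s • x = 0 → ∃ y : M, x = t • y := by
  classical
  intro x hx
  set e := Module.Free.chooseBasis R M with he
  set v := e.repr x with hv
  have hcoord : ∀ i, s * v i = 0 := by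
    intro i
    have h1 : s • v = 0 := by rw [hv, ← map_smul, hx, map_zero]
    calc s * v i = (s • v) i := by rw [Finsupp.smul_apply, smul_eq_mul]
      _ = 0 := by rw [h1]; rfl
  have hrch : ∃ rch : R → R, rch 0 = 0 ∧ ∀ b : R, s * b = 0 → b = t * rch b := by
    refine ⟨fun b => if hb : b = 0 then 0 else
      if h : s * b = 0 then (hdiv b h).choose else 0, by simp, ?_⟩
    intro b hb
    by_cases h0 : b = 0
    · simp [h0]
    · simp only [dif_neg h0, dif_pos hb]
      exact (hdiv b hb).choose_spec
  obtain ⟨rch, h0, hspec⟩ := hrch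
  refine ⟨e.repr.symm (v.mapRange rch h0), ?_⟩
  apply e.repr.injective
  rw [map_smul, LinearEquiv.apply_symm_apply, ← hv]
  ext i
  rw [Finsupp.smul_apply, Finsupp.mapRange_apply, smul_eq_mul]
  exact hspec (v i) (hcoord i)

end BaerFacts

open Polynomial

/-- **Free Complement Lemma.** Let `G` be cyclic of order `p^n`.  If `V ⊆ U` are free
`𝔽_p[G]`-modules, then there is a free `𝔽_p[G]`-submodule `Ṽ` of `U` with `U = V ⊕ Ṽ`. -/
theorem statement_8
    (p n : ℕ) (hp : p.Prime) (hn : 1 ≤ n)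
    (G : Type) [CommGroup G] (σ : G)
    (hσ : ∀ g : G, g ∈ Subgroup.zpowers σ) (hG : Nat.card G = p ^ n)
    (U : Type) [AddCommGroup U] [Module (MonoidAlgebra (ZMod p) G) U]
    [Module.Free (MonoidAlgebra (ZMod p) G) U]
    (V : Submodule (MonoidAlgebra (ZMod p) G) U)
    (hV : Module.Free (MonoidAlgebra (ZMod p) G) V) :
    ∃ V' : Submodule (MonoidAlgebra (ZMod p) G) U,
      Module.Free (MonoidAlgebra (ZMod p) G) V' ∧ IsCompl V V' := by
  classical
  haveI : Fact p.Prime := ⟨hp⟩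
  haveI : Finite G := Nat.finite_of_card_ne_zero (by rw [hG]; exact pow_ne_zero _ hp.ne_zero)
  set t' : MonoidAlgebra (ZMod p) G := MonoidAlgebra.of (ZMod p) G σ with ht'
  set φ : Polynomial (ZMod p) →+* MonoidAlgebra (ZMod p) G :=
    (aeval t' : Polynomial (ZMod p) →ₐ[ZMod p] MonoidAlgebra (ZMod p) G).toRingHom with hφ
  have hφX : φ X = t' := by simp [hφ]
  have hsurj : Function.Surjective φ := by
    intro x
    induction x using MonoidAlgebra.induction_on with
    | of g =>
      obtain ⟨k, hk⟩ := mem_powers_iff_mem_zpowers.mpr (hσ g)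
      refine ⟨X ^ k, ?_⟩
      rw [map_pow, hφX, ht', ← map_pow]
      exact congrArg _ hk
    | add f g hf hg =>
      obtain ⟨Pf, rfl⟩ := hf
      obtain ⟨Pg, rfl⟩ := hg
      exact ⟨Pf + Pg, map_add _ _ _⟩
    | smul r f hf =>
      obtain ⟨Pf, rfl⟩ := hf
      refine ⟨C r * Pf, ?_⟩
      rw [map_mul]
      have hC : φ (C r) = algebraMap (ZMod p) (MonoidAlgebra (ZMod p) G) r := by
        simp [hφ]
      rw [hC, ← Algebra.smul_def]
  have hqm : φ ((X - C 1) ^ p ^ n) = 0 := by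
    have hchar : ((X : Polynomial (ZMod p)) - C 1) ^ p ^ n
        = X ^ p ^ n - (C 1 : Polynomial (ZMod p)) ^ p ^ n := sub_pow_char_pow X (C 1) n
    have hσm : σ ^ p ^ n = 1 := by rw [← hG]; exact pow_card_eq_one'
    rw [hchar, map_sub, map_pow, map_pow, hφX]
    rw [ht', ← map_pow, hσm]
    simp [MonoidAlgebra.one_def]
  have hqprime : Prime ((X : Polynomial (ZMod p)) - C 1) :=
    UniqueFactorizationMonoid.irreducible_iff_prime.mp (irreducible_X_sub_C (1 : ZMod p))
  obtain ⟨j, hj1, hker⟩ : ∃ j, 1 ≤ j ∧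
      RingHom.ker φ = Ideal.span {((X : Polynomial (ZMod p)) - C 1) ^ j} := by
    haveI hprin : (RingHom.ker φ).IsPrincipal := IsPrincipalIdealRing.principal _
    have hspan : Ideal.span {Submodule.IsPrincipal.generator (RingHom.ker φ)}
        = RingHom.ker φ := Ideal.span_singleton_generator _
    have hdvd : Submodule.IsPrincipal.generator (RingHom.ker φ)
        ∣ ((X : Polynomial (ZMod p)) - C 1) ^ p ^ n := by
      rw [← Ideal.mem_span_singleton, hspan, RingHom.mem_ker]; exact hqm
    obtain ⟨i, hi, hassoc⟩ := (dvd_prime_pow hqprime _).mp hdvd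
    refine ⟨i, ?_, ?_⟩
    · by_contra h0
      push_neg at h0
      have hi0 : i = 0 := by omega
      rw [hi0, pow_zero] at hassoc
      have hdu : IsUnit (Submodule.IsPrincipal.generator (RingHom.ker φ)) :=
        associated_one_iff_isUnit.mp hassoc
      have : RingHom.ker φ = ⊤ := by
        rw [← hspan, Ideal.span_singleton_eq_top]; exact hdu
      have h1 : φ 1 = 0 := by rw [← RingHom.mem_ker, this]; trivial
      rw [map_one] at h1
      exact one_ne_zero h1
    · rw [← hspan]
      exact Ideal.span_singleton_eq_span_singleton.mpr hassoc
  haveI hPIR : IsPrincipalIdealRing (MonoidAlgebra (ZMod p) G) :=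
    IsPrincipalIdealRing.of_surjective φ hsurj
  have hstar := star_lem φ hsurj hqprime hker
  have hrep := rep_lem φ hsurj hqprime hker
  have hdiv := div_lem φ hsurj hqprime hker hj1
  set t : MonoidAlgebra (ZMod p) G := φ (X - C 1) with ht
  have htj : t ^ j = 0 := by
    rw [ht, ← map_pow]
    exact (mem_ker_iff' φ hker _).mpr dvd_rfl
  have hbaer : Module.Baer (MonoidAlgebra (ZMod p) G) ↥V := baer_of_free' hstar ↥V
  haveI hinj : Module.Injective (MonoidAlgebra (ZMod p) G) ↥V := hbaer.injective
  obtain ⟨π, hπ⟩ := hinj.out V.subtype V.injective_subtype LinearMap.id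
  refine ⟨LinearMap.ker π, ?_, ?_⟩
  · -- freeness of the complement
    have hkerU : ∀ x : U, t ^ (j - 1) • x = 0 → ∃ y : U, x = t • y :=
      ker_smul_free' (t := t) (s := t ^ (j - 1)) (fun b hb => hdiv b hb) U
    have hkerV' : ∀ x : ↥(LinearMap.ker π), t ^ (j - 1) • x = 0 →
        ∃ y : ↥(LinearMap.ker π), x = t • y := by
      rintro ⟨x, hx⟩ hx0
      have hπx : π x = 0 := LinearMap.mem_ker.mp hx
      have hx0' : t ^ (j - 1) • x = 0 := by
        have h := congrArg (Subtype.val) hx0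
        simpa using h
      obtain ⟨y, hy⟩ := hkerU x hx0'
      refine ⟨⟨y - V.subtype (π y), ?_⟩, ?_⟩
      · rw [LinearMap.mem_ker, map_sub]
        have h2 : π (V.subtype (π y)) = π y := hπ (π y)
        rw [h2, sub_self]
      · apply Subtype.ext
        show x = t • (y - V.subtype (π y))
        rw [smul_sub, ← hy]
        have h1 : t • V.subtype (π y) = V.subtype (π (t • y)) := by
          rw [map_smul, map_smul]
        rw [h1, ← hy, hπx, map_zero, sub_zero]
    exact free_of_ker_pow hj1 htj hrep _ hkerV'
  · exact LinearMap.isCompl_of_proj hπ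
end

section
/- (Subfield Generators) Suppose ξ_p ∈ F. Then one may choose elements a_i ∈ K_i^× for 0 ≤ i < n such that K_{i+1} = K_i(p-th root of a_i) for all 0 ≤ i < n, and N_{K_i/K_j}(a_i) = a_j for all 0 ≤ j < i < n. -/
namespace PC

/-- The subgroup of `p`-th powers of units of `K`. -/
def pPow (p : ℕ) (K : Type) [Field K] : Subgroup Kˣ :=
  (powMonoidHom p : Kˣ →* Kˣ).range

/-- `J(K) = K^×/K^{×p}`, as a multiplicative abelian group. -/
abbrev Jgrp (p : ℕ) (K : Type) [Field K] := Kˣ ⧸ pPow p K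

/-- The class `[u] ∈ J` of a unit `u` of `K`. -/
def cls (p : ℕ) {K : Type} [Field K] (u : Kˣ) : Jgrp p K := QuotientGroup.mk u

lemma Jgrp_pow (p : ℕ) {K : Type} [Field K] (x : Jgrp p K) : x ^ p = 1 := by
  induction x using QuotientGroup.induction_on with
  | H u =>
    show ((QuotientGroup.mk' (pPow p K)) u) ^ p = 1
    rw [← map_pow, QuotientGroup.mk'_apply, QuotientGroup.eq_one_iff]
    exact ⟨u, rfl⟩

/-- The action of a Galois automorphism on `J`. -/
noncomputable def galJ (p : ℕ) {F K : Type} [Field F] [Field K] [Algebra F K]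
    (σ : K ≃ₐ[F] K) : Jgrp p K →* Jgrp p K :=
  QuotientGroup.map (pPow p K) (pPow p K) (Units.map (σ : K →* K)) (by
    intro x hx
    rw [Subgroup.mem_comap]
    obtain ⟨v, rfl⟩ := hx
    exact ⟨Units.map (σ : K →* K) v, by simp [powMonoidHom, map_pow]⟩)

/-- `σ - 1` as an endomorphism of `J` (multiplicatively, `x ↦ σ(x)·x⁻¹`). -/
noncomputable def sub1 (p : ℕ) {F K : Type} [Field F] [Field K] [Algebra F K]
    (σ : K ≃ₐ[F] K) : Jgrp p K →* Jgrp p K :=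
  MonoidHom.mk' (fun x => galJ p σ x / x) (by
    intro a b
    show galJ p σ (a * b) / (a * b) = galJ p σ a / a * (galJ p σ b / b)
    rw [map_mul]
    exact mul_div_mul_comm (galJ p σ a) (galJ p σ b) a b)

/-- `(σ - 1)^k` as an endomorphism of `J`. -/
noncomputable def sub1pow (p : ℕ) {F K : Type} [Field F] [Field K] [Algebra F K]
    (σ : K ≃ₐ[F] K) (k : ℕ) : Jgrp p K →* Jgrp p K :=
  Nat.rec (MonoidHom.id _) (fun _ ih => (sub1 p σ).comp ih) k

/-- The norm endomorphism of `J`, induced by `N_{K/F}` followed by the inclusion of `F` in `K`. -/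
noncomputable def normOp (p : ℕ) (F : Type) {K : Type} [Field F] [Field K] [Algebra F K] :
    Jgrp p K →* Jgrp p K :=
  QuotientGroup.map (pPow p K) (pPow p K)
    (Units.map ((algebraMap F K : F →* K).comp (Algebra.norm F : K →* F))) (by
      intro x hx
      rw [Subgroup.mem_comap]
      obtain ⟨v, rfl⟩ := hx
      exact ⟨Units.map ((algebraMap F K : F →* K).comp (Algebra.norm F : K →* F)) v,
        by simp [powMonoidHom, map_pow]⟩)

/-- The cyclic `𝔽_p[Gal(K/F)]`-submodule of `J` generated by an element. -/
noncomputable def cyc (p : ℕ) (F : Type) {K : Type} [Field F] [Field K] [Algebra F K]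
    (x : Jgrp p K) : Subgroup (Jgrp p K) :=
  Subgroup.closure {y | ∃ τ : K ≃ₐ[F] K, galJ p τ x = y}

/-- The subgroup of `J` fixed pointwise by a subgroup `H` of the Galois group. -/
noncomputable def fixedJ (p : ℕ) {F K : Type} [Field F] [Field K] [Algebra F K]
    (H : Subgroup (K ≃ₐ[F] K)) : Subgroup (Jgrp p K) where
  carrier := {x | ∀ τ ∈ H, galJ p τ x = x}
  one_mem' := by
    intro τ _
    exact map_one (galJ p τ)
  mul_mem' := by
    intro a b ha hb τ hτ
    rw [map_mul, ha τ hτ, hb τ hτ]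
  inv_mem' := by
    intro a ha τ hτ
    rw [map_inv, ha τ hτ]

/-- The units of `K` lying in an intermediate field `E`. -/
def unitsIn {F K : Type} [Field F] [Field K] [Algebra F K]
    (E : IntermediateField F K) : Subgroup Kˣ where
  carrier := {u | (u : K) ∈ E}
  one_mem' := by
    show ((1 : Kˣ) : K) ∈ E
    rw [Units.val_one]
    exact one_mem E
  mul_mem' := by
    intro a b ha hb
    show ((a * b : Kˣ) : K) ∈ E
    rw [Units.val_mul]
    exact mul_mem ha hb
  inv_mem' := by
    intro u hu
    show ((u⁻¹ : Kˣ) : K) ∈ E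
    rw [Units.val_inv_eq_inv_val]
    exact inv_mem hu

/-- `[E^×] ⊆ J` : the classes of units of the intermediate field `E`. -/
noncomputable def clsOf (p : ℕ) {F K : Type} [Field F] [Field K] [Algebra F K]
    (E : IntermediateField F K) : Subgroup (Jgrp p K) :=
  (unitsIn E).map (QuotientGroup.mk' (pPow p K))

/-- `[K_m^×]` for `m ∈ {-∞, 0, 1, 2, ...}`, with `[K_{-∞}^×] = {1}`. -/
noncomputable def clsOfW (p : ℕ) {F K : Type} [Field F] [Field K] [Algebra F K]
    (Ki : ℕ → IntermediateField F K) (m : WithBot ℕ) : Subgroup (Jgrp p K) :=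
  m.recBotCoe ⊥ (fun i => clsOf p (Ki i))

/-- `p^m` for `m ∈ {-∞, 0, 1, 2, ...}`, with the convention `p^{-∞} = 0`. -/
def pPowW (p : ℕ) (m : WithBot ℕ) : ℕ := m.recBotCoe 0 (fun i => p ^ i)

/-- `m ∔ 1` : `-∞ ∔ 1 = 0` and `m ∔ 1 = m + 1` for `m ≥ 0`. -/
def succW (m : WithBot ℕ) : ℕ := m.recBotCoe 0 (fun i => i + 1)

/-- `[N_{E/F}(E^×)] ⊆ J` : classes of norms (to `F`) of units of an intermediate field `E`. -/
noncomputable def normClsOf (p : ℕ) {F K : Type} [Field F] [Field K] [Algebra F K]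
    (E : IntermediateField F K) : Subgroup (Jgrp p K) :=
  Subgroup.map (QuotientGroup.mk' (pPow p K))
    ((Units.map ((algebraMap F K : F →* K).comp (Algebra.norm F : ↥E →* F))).range)

/-- `[N_{K/F}(K^×)] ⊆ J`. -/
noncomputable def normClsTop (p : ℕ) (F K : Type) [Field F] [Field K] [Algebra F K] :
    Subgroup (Jgrp p K) :=
  Subgroup.map (QuotientGroup.mk' (pPow p K))
    ((Units.map ((algebraMap F K : F →* K).comp (Algebra.norm F : K →* F))).range)

/-- `[N_{K/E}(K^×)] ⊆ J` for an intermediate field `E` of `K/F`. -/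
noncomputable def relNormCls (p : ℕ) {F K : Type} [Field F] [Field K] [Algebra F K]
    (E : IntermediateField F K) : Subgroup (Jgrp p K) :=
  Subgroup.map (QuotientGroup.mk' (pPow p K))
    ((Units.map ((algebraMap (↥E) K : ↥E →* K).comp (Algebra.norm (↥E) : K →* ↥E))).range)

/-- `Y` is a direct sum of cyclic `𝔽_p[G]`-submodules of `J`, each of `𝔽_p`-dimension `d`. -/
noncomputable def IsCyclicSumDim (p : ℕ) (F : Type) {K : Type} [Field F] [Field K] [Algebra F K]
    (Y : Subgroup (Jgrp p K)) (d : ℕ) : Prop :=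
  ∃ (ι : Type) (g : ι → Jgrp p K),
    (∀ k, Nat.card (cyc p F (g k)) = p ^ d) ∧
    (∀ k : ι, cyc p F (g k) ⊓ (⨆ k' ∈ {k' : ι | k' ≠ k}, cyc p F (g k')) = ⊥) ∧
    Y = ⨆ k, cyc p F (g k)

/-- The "stage" predicate entering the definition of `i(K/E)` : there is `δ ∈ K^×` whose
norm class `[N_{K/E}(δ)]_E` is nontrivial and with `[δ]^{τ-1} ∈ C` for all `τ ∈ Gal(K/E)`. -/
noncomputable def Stage (p : ℕ) (E : Type) {K : Type} [Field E] [Field K] [Algebra E K]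
    (C : Subgroup (Jgrp p K)) : Prop :=
  ∃ δ : Kˣ, (∀ y : E, y ^ p ≠ Algebra.norm E (δ : K)) ∧
    ∀ τ : K ≃ₐ[E] K, cls p (Units.map (τ : K →* K) δ * δ⁻¹) ∈ C

/-- `m = i(K/F)` : the stage `m` is realized and no smaller stage is. -/
noncomputable def IsIdx (p : ℕ) {F K : Type} [Field F] [Field K] [Algebra F K]
    (Ki : ℕ → IntermediateField F K) (m : WithBot ℕ) : Prop :=
  Stage p F (clsOfW p Ki m) ∧ ∀ i : WithBot ℕ, i < m → ¬ Stage p F (clsOfW p Ki i)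

/-- `δ` is an exceptional element of `K/F`, relative to `m = i(K/F)`. -/
noncomputable def IsExceptional (p : ℕ) (F : Type) {K : Type} [Field F] [Field K] [Algebra F K]
    (Ki : ℕ → IntermediateField F K) (m : WithBot ℕ) (δ : Kˣ) : Prop :=
  (∀ y : F, y ^ p ≠ Algebra.norm F (δ : K)) ∧
    ∀ τ : K ≃ₐ[F] K, cls p (Units.map (τ : K →* K) δ * δ⁻¹) ∈ clsOfW p Ki m

section Statement9Aux

open Finset

lemma prod_range_mul' {M : Type*} [CommMonoid M] (f : ℕ → M) (V U : ℕ) :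
    ∏ w ∈ Finset.range (V * U), f w
      = ∏ u ∈ Finset.range U, ∏ v ∈ Finset.range V, f (V * u + v) := by
  induction U with
  | zero => simp
  | succ U ih =>
      rw [Nat.mul_succ, Finset.prod_range_add, ih, Finset.prod_range_succ]

lemma subgroup_eq_of_le_of_card_eq' {G : Type*} [Group G] [Finite G] {H K : Subgroup G}
    (h : H ≤ K) (hc : Nat.card H = Nat.card K) : H = K := by
  apply SetLike.coe_injective
  apply Set.eq_of_subset_of_ncard_le h
  · rw [← Nat.card_coe_set_eq, ← Nat.card_coe_set_eq]
    simp only [SetLike.coe_sort_coe]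
    exact hc.ge

lemma normal_of_gen {G : Type*} [Group G] {g : G} (hg : ∀ x, x ∈ Subgroup.zpowers g)
    (J : Subgroup G) : J.Normal := by
  constructor
  intro x hx y
  obtain ⟨k, hk⟩ := hg x
  obtain ⟨m, hm⟩ := hg y
  have hcomm : y * x = x * y := by
    rw [← hk, ← hm, ← zpow_add, ← zpow_add, add_comm]
  rw [hcomm, mul_assoc, mul_inv_cancel, mul_one]
  exact hx

lemma alg_pow_fixed {F K : Type*} [Field F] [Field K] [Algebra F K]
    (u : K ≃ₐ[F] K) (x : K) (h : u x = x) (m : ℕ) : (u ^ m) x = x := by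
  induction m with
  | zero => rfl
  | succ m ih => rw [pow_succ', AlgEquiv.mul_apply, ih, h]

lemma alg_zpow_fixed {F K : Type*} [Field F] [Field K] [Algebra F K]
    (u : K ≃ₐ[F] K) (x : K) (h : u x = x) (k : ℤ) : (u ^ k) x = x := by
  match k with
  | Int.ofNat m => rw [Int.ofNat_eq_coe, zpow_natCast]; exact alg_pow_fixed u x h m
  | Int.negSucc m =>
      have h1 : (u ^ (m + 1)) x = x := alg_pow_fixed u x h (m + 1)
      rw [zpow_negSucc]
      calc (u ^ (m + 1))⁻¹ x = (u ^ (m + 1))⁻¹ ((u ^ (m + 1)) x) := by rw [h1]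
      _ = ((u ^ (m + 1))⁻¹ * u ^ (m + 1)) x := by rw [AlgEquiv.mul_apply]
      _ = x := by rw [inv_mul_cancel]; rfl

lemma norm_transfer {R S T : Type*} [CommRing R] [CommRing S] [CommRing T]
    [Algebra R S] [Algebra R T] (e : S ≃+* T)
    (he : ∀ r : R, e (algebraMap R S r) = algebraMap R T r) (x : S) :
    Algebra.norm R x = Algebra.norm R (e x) := by
  let ℓ : S ≃ₗ[R] T :=
    { toFun := e, invFun := e.symm,
      map_add' := map_add e,
      map_smul' := by
        intro r s
        simp only [Algebra.smul_def, map_mul, he, RingHom.id_apply]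
      left_inv := e.left_inv, right_inv := e.right_inv }
  have hconj : (Algebra.lmul R T) (e x)
      = ℓ.toLinearMap ∘ₗ ((Algebra.lmul R S) x) ∘ₗ ℓ.symm.toLinearMap := by
    ext t
    show e x * t = e (x * e.symm t)
    rw [map_mul, RingEquiv.apply_symm_apply]
  rw [Algebra.norm_apply, Algebra.norm_apply, hconj, LinearMap.det_conj]

lemma exists_eigenvector {F K : Type*} [Field F] [Field K] [Algebra F K]
    (p : ℕ) (hp : 0 < p) (τ : K ≃ₐ[F] K) (hτord : orderOf τ = p)
    (ζ : K) (hζfix : τ ζ = ζ) (hζp : ζ ^ p = 1) (hζ0 : ζ ≠ 0) :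
    ∃ α : K, α ≠ 0 ∧ τ α = ζ * α := by
  have hτp : τ ^ p = 1 := by rw [← hτord]; exact pow_orderOf_eq_one τ
  have hex : ∃ θ : K, (∑ t ∈ Finset.range p, ζ⁻¹ ^ t * (τ ^ t) θ) ≠ 0 := by
    by_contra hall
    push_neg at hall
    have hinj : Function.Injective (fun t : Fin p => ((τ ^ (t : ℕ) : K ≃ₐ[F] K) : K →* K)) := by
      intro t s hts
      have h2 : (τ ^ (t : ℕ) : K ≃ₐ[F] K) = τ ^ (s : ℕ) := by
        apply AlgEquiv.ext
        intro x
        exact DFunLike.congr_fun hts x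
      have := pow_injOn_Iio_orderOf (x := τ) (by rw [hτord]; exact t.2)
        (by rw [hτord]; exact s.2) h2
      exact Fin.ext this
    have hli := (linearIndependent_monoidHom K K).comp
        (fun t : Fin p => ((τ ^ (t : ℕ) : K ≃ₐ[F] K) : K →* K)) hinj
    have hzero := Fintype.linearIndependent_iff.mp hli (fun t => ζ⁻¹ ^ (t : ℕ)) ?_ ⟨0, hp⟩
    · have : ((⟨0, hp⟩ : Fin p) : ℕ) = 0 := rfl
      rw [this, pow_zero] at hzero
      exact one_ne_zero (α := K) hzero
    · funext θ
      have h3 := hall θ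
      simp only [Finset.sum_apply, Pi.smul_apply, smul_eq_mul]
      rw [← Fin.sum_univ_eq_sum_range (fun t => ζ⁻¹ ^ t * (τ ^ t) θ) p] at h3
      convert h3 using 2
      all_goals rfl
  obtain ⟨θ, hθ⟩ := hex
  set α := ∑ t ∈ Finset.range p, ζ⁻¹ ^ t * (τ ^ t) θ with hα
  refine ⟨α, hθ, ?_⟩
  set Gt : ℕ → K := fun t => ζ * (ζ⁻¹ ^ t * (τ ^ t) θ) with hGt
  have hG0 : Gt 0 = ζ * θ := by simp [hGt]
  have hGp : Gt p = ζ * θ := by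
    simp only [hGt]
    rw [inv_pow, hζp, inv_one, one_mul, hτp]
    rfl
  have hτa : τ α = ∑ t ∈ Finset.range p, Gt (t + 1) := by
    rw [hα, map_sum]
    refine Finset.sum_congr rfl fun t _ => ?_
    have h1 : τ (ζ⁻¹ ^ t) = ζ⁻¹ ^ t := by rw [map_pow, map_inv₀, hζfix]
    have h2 : τ ((τ ^ t) θ) = (τ ^ (t + 1)) θ := by rw [pow_succ', AlgEquiv.mul_apply]
    rw [map_mul, h1, h2]
    simp only [hGt]
    rw [pow_succ' ζ⁻¹ t]
    field_simp
  have hζa : ζ * α = ∑ t ∈ Finset.range p, Gt t := by rw [hα, Finset.mul_sum]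
  have hsum : ∑ t ∈ Finset.range p, Gt (t + 1) = ∑ t ∈ Finset.range p, Gt t := by
    have h1 := Finset.sum_range_succ' Gt p
    have h2 := Finset.sum_range_succ Gt p
    have h3 := h1.symm.trans h2
    rw [hG0, hGp] at h3
    exact add_right_cancel h3
  rw [hτa, hsum, ← hζa]

end Statement9Aux

set_option maxHeartbeats 2000000 in
set_option synthInstance.maxHeartbeats 400000 in
/-- **Subfield Generators.** If `ξ_p ∈ F`, one may choose `a_i ∈ K_i^×`, `0 ≤ i < n`, with
`K_{i+1} = K_i(ᵖ√a_i)` and `N_{K_i/K_j}(a_i) = a_j` for all `0 ≤ j < i < n`. -/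
theorem statement_9
    (p n : ℕ) (hp : p.Prime) (hn : 1 ≤ n)
    (F K : Type) [Field F] [Field K] [Algebra F K]
    [FiniteDimensional F K] [IsGalois F K]
    (σ : K ≃ₐ[F] K) (hσ : ∀ τ : K ≃ₐ[F] K, τ ∈ Subgroup.zpowers σ)
    (hG : Nat.card (K ≃ₐ[F] K) = p ^ n)
    (Ki : ℕ → IntermediateField F K)
    (hKideg : ∀ i, i ≤ n → Module.finrank F ↥(Ki i) = p ^ i)
    (hchain : ∀ i j : ℕ, i ≤ j → j ≤ n → Ki i ≤ Ki j)
    (hξ : ∃ ζ : F, IsPrimitiveRoot ζ p) :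
    ∃ a : (i : ℕ) → ↥(Ki i),
      (∀ i : ℕ, i < n → (a i : K) ≠ 0) ∧
      (∀ i : ℕ, i < n → ∃ r : K, r ^ p = (a i : K) ∧
        Ki (i + 1) = Ki i ⊔ IntermediateField.adjoin F {r}) ∧
      (∀ j i : ℕ, ∀ hji : j < i, ∀ hi : i < n,
        (@Algebra.norm (↥(Ki j)) (↥(Ki i)) _ _
          ((IntermediateField.inclusion (hchain j i hji.le hi.le)).toRingHom.toAlgebra))
          (a i) = a j) := by
  classical
  obtain ⟨ζ, hζ⟩ := hξ
  have hp1 : 1 < p := hp.one_lt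
  have hp0 : 0 < p := hp.pos
  have hcardG : Fintype.card (K ≃ₐ[F] K) = p ^ n := by
    rw [← Nat.card_eq_fintype_card]; exact hG
  have horder : orderOf σ = p ^ n := by
    rw [orderOf_eq_card_of_forall_mem_zpowers hσ]; exact hG
  have hfinrankFK : Module.finrank F K = p ^ n := by
    rw [← IsGalois.card_aut_eq_finrank, hG]
  -- the primitive root in K
  set ζK : K := algebraMap F K ζ with hζKdef
  have hζK : IsPrimitiveRoot ζK p := hζ.map_of_injective (algebraMap F K).injective
  have hζKp : ζK ^ p = 1 := hζK.pow_eq_one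
  have hζKne1 : ζK ≠ 1 := hζK.ne_one hp1
  have hζK0 : ζK ≠ 0 := fun h => by
    have : (1 : K) = 0 := by rw [← hζKp, h, zero_pow hp0.ne']
    exact one_ne_zero this
  have hgζ : ∀ g : K ≃ₐ[F] K, g ζK = ζK := fun g => g.commutes ζ
  -- order of powers of σ
  have hord_pow : ∀ i : ℕ, i ≤ n → orderOf (σ ^ p ^ i) = p ^ (n - i) := by
    intro i hi
    rw [orderOf_pow, horder, Nat.gcd_eq_right (pow_dvd_pow p hi), Nat.pow_div hi hp0]
  -- τ and the Kummer generator α of K over K_{n-1}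
  obtain ⟨α, hα0, hτα⟩ : ∃ α : K, α ≠ 0 ∧ (σ ^ p ^ (n - 1)) α = ζK * α := by
    refine exists_eigenvector p hp0 _ ?_ ζK (hgζ _) hζKp hζK0
    rw [hord_pow (n - 1) (by omega)]
    have h1 : n - (n - 1) = 1 := by omega
    rw [h1, pow_one]
  -- finrank of K over Ki i
  have hfinrank_top : ∀ i, i ≤ n → Module.finrank ↥(Ki i) K = p ^ (n - i) := by
    intro i hi
    have h1 : Module.finrank F ↥(Ki i) * Module.finrank ↥(Ki i) K = p ^ n := by
      rw [Module.finrank_mul_finrank, hfinrankFK]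
    rw [hKideg i hi] at h1
    have h2 : p ^ i * p ^ (n - i) = p ^ n := by
      rw [← pow_add]
      congr 1
      omega
    exact Nat.eq_of_mul_eq_mul_left (pow_pos hp0 i) (by rw [h1, h2])
  -- all subgroups of the Galois group are normal
  have hnormal : ∀ J : Subgroup (K ≃ₐ[F] K), J.Normal := normal_of_gen hσ
  -- the fixing subgroup of Ki i is the group of zpowers of σ ^ p ^ i
  have hfixing : ∀ i, i ≤ n →
      IntermediateField.fixingSubgroup (Ki i) = Subgroup.zpowers (σ ^ p ^ i) := by
    intro i hi
    set J := IntermediateField.fixingSubgroup (Ki i) with hJ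
    have hJcard : Nat.card J = p ^ (n - i) := by
      rw [IsGalois.card_fixingSubgroup_eq_finrank,
        hfinrank_top i hi]
    have hJindex : J.index = p ^ i := by
      have h3 := Subgroup.card_mul_index J
      rw [hJcard, hG] at h3
      have h2 : p ^ (n - i) * p ^ i = p ^ n := by
        rw [← pow_add]; congr 1; omega
      exact Nat.eq_of_mul_eq_mul_left (pow_pos hp0 (n - i)) (by rw [h3, h2])
    haveI : J.Normal := hnormal J
    have hmemJ : σ ^ p ^ i ∈ J := by
      have h4 : ((QuotientGroup.mk' J) σ) ^ p ^ i = 1 := by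
        rw [← hJindex, Subgroup.index_eq_card]
        exact pow_card_eq_one'
      rw [← map_pow, QuotientGroup.mk'_apply, QuotientGroup.eq_one_iff] at h4
      exact h4
    have hle : Subgroup.zpowers (σ ^ p ^ i) ≤ J := Subgroup.zpowers_le.mpr hmemJ
    refine (subgroup_eq_of_le_of_card_eq' hle ?_).symm
    rw [Nat.card_zpowers, hord_pow i hi, hJcard]
  have hfix : ∀ i, i ≤ n →
      Ki i = IntermediateField.fixedField (Subgroup.zpowers (σ ^ p ^ i)) := by
    intro i hi
    rw [← hfixing i hi]
    exact (IsGalois.fixedField_fixingSubgroup (Ki i)).symm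
  -- membership criterion
  have hmem : ∀ i, i ≤ n → ∀ x : K, (x ∈ Ki i ↔ (σ ^ p ^ i) x = x) := by
    intro i hi x
    rw [hfix i hi]
    constructor
    · intro hx
      exact hx ⟨σ ^ p ^ i, Subgroup.mem_zpowers _⟩
    · rintro hx ⟨g, k, rfl⟩
      show ((σ ^ p ^ i) ^ k) • x = x
      rw [AlgEquiv.smul_def]
      exact alg_zpow_fixed _ x hx k
  have hσapply : ∀ (a b : ℕ) (x : K), (σ ^ a) ((σ ^ b) x) = (σ ^ (a + b)) x := by
    intro a b x
    rw [pow_add, AlgEquiv.mul_apply]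
  set r : ℕ → K := fun i => ∏ u ∈ Finset.range (p ^ (n - 1 - i)), (σ ^ (p ^ i * u)) α
    with hrdef
  have hrval : ∀ i, r i = ∏ u ∈ Finset.range (p ^ (n - 1 - i)), (σ ^ (p ^ i * u)) α :=
    fun i => rfl
  have hr0 : ∀ i, r i ≠ 0 := by
    intro i
    rw [hrval]
    apply Finset.prod_ne_zero_iff.mpr
    intro u _ h
    exact hα0 ((σ ^ (p ^ i * u)).injective (by rwa [map_zero]))
  have key1 : ∀ i, i < n → (σ ^ p ^ i) (r i) = ζK * r i := by
    intro i hi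
    have hgP : (σ ^ (p ^ i * p ^ (n - 1 - i))) α = ζK * α := by
      have h6 : p ^ i * p ^ (n - 1 - i) = p ^ (n - 1) := by
        rw [← pow_add]; congr 1; omega
      rw [h6, hτα]
    have hg0 : (σ ^ (p ^ i * 0)) α = α := by
      rw [Nat.mul_zero, pow_zero]; rfl
    have hmap : (σ ^ p ^ i) (r i)
        = ∏ u ∈ Finset.range (p ^ (n - 1 - i)), (σ ^ (p ^ i * (u + 1))) α := by
      rw [hrval, map_prod]
      refine Finset.prod_congr rfl fun u _ => ?_
      rw [hσapply]
      congr 2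
      ring
    have hs1 := Finset.prod_range_succ' (fun u => (σ ^ (p ^ i * u)) α) (p ^ (n - 1 - i))
    have hs2 := Finset.prod_range_succ (fun u => (σ ^ (p ^ i * u)) α) (p ^ (n - 1 - i))
    rw [hg0] at hs1
    rw [hgP, ← hrval i] at hs2
    have h5 : (σ ^ p ^ i) (r i) * α = r i * (ζK * α) := by
      rw [hmap, ← hs1, hs2]
    have h7 : (σ ^ p ^ i) (r i) * α = (ζK * r i) * α := by
      rw [h5]; ring
    exact mul_right_cancel₀ hα0 h7
  have key2 : ∀ i, i < n → ∀ k : ℕ, ((σ ^ p ^ i) ^ k) (r i) = ζK ^ k * r i := by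
    intro i hi k
    induction k with
    | zero => simp
    | succ k ih =>
        rw [pow_succ', AlgEquiv.mul_apply, ih, map_mul, map_pow, hgζ, key1 i hi,
          pow_succ' ζK k]
        ring
  have key3 : ∀ i, i < n → (σ ^ p ^ (i + 1)) (r i) = r i := by
    intro i hi
    have h8 : σ ^ p ^ (i + 1) = (σ ^ p ^ i) ^ p := by
      rw [← pow_mul, ← pow_succ]
    rw [h8, key2 i hi p, hζKp, one_mul]
  have hrmem : ∀ i, i < n → r i ∈ Ki (i + 1) := by
    intro i hi
    exact (hmem (i + 1) (by omega) (r i)).mpr (key3 i hi)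
  have hamem : ∀ i, i < n → (r i) ^ p ∈ Ki i := by
    intro i hi
    refine (hmem i hi.le ((r i) ^ p)).mpr ?_
    rw [map_pow, key1 i hi, mul_pow, hζKp, one_mul]
  have hrnot : ∀ i, i < n → r i ∉ Ki i := by
    intro i hi hin
    have h9 := (hmem i hi.le (r i)).mp hin
    rw [key1 i hi] at h9
    exact hζKne1 (mul_right_cancel₀ (hr0 i) (by rw [h9, one_mul]))
  refine ⟨fun i => if h : i < n then ⟨r i ^ p, hamem i h⟩ else 1, ?_, ?_, ?_⟩
  · -- (1) nonvanishing
    intro i hi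
    dsimp only
    rw [dif_pos hi]
    exact pow_ne_zero p (hr0 i)
  · -- (2) Kummer generation of each step
    intro i hi
    refine ⟨r i, ?_, ?_⟩
    · dsimp only
      rw [dif_pos hi]
    · set E := Ki i ⊔ IntermediateField.adjoin F {r i} with hE
      have hriE : r i ∈ E :=
        le_sup_right (α := IntermediateField F K)
          (IntermediateField.subset_adjoin F {r i} (Set.mem_singleton _))
      have hKiE : Ki i ≤ E := le_sup_left
      have hEle : E ≤ Ki (i + 1) := by
        rw [hE]
        refine sup_le (hchain i (i + 1) (by omega) (by omega)) ?_
        refine (IntermediateField.adjoin_le_iff).mpr ?_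
        intro x hx
        rw [Set.mem_singleton_iff] at hx
        rw [hx]
        exact hrmem i hi
      have hN1 : Subgroup.zpowers (σ ^ p ^ (i + 1)) ≤ IntermediateField.fixingSubgroup E := by
        rw [← hfixing (i + 1) (by omega)]
        exact IntermediateField.fixingSubgroup_antitone hEle
      have hN2 : IntermediateField.fixingSubgroup E ≤ Subgroup.zpowers (σ ^ p ^ i) := by
        rw [← hfixing i hi.le]
        exact IntermediateField.fixingSubgroup_antitone hKiE
      have hNne : σ ^ p ^ i ∉ IntermediateField.fixingSubgroup E := by
        intro hmem'
        have h9 := ((IntermediateField.mem_fixingSubgroup_iff E _).mp hmem') (r i) hriE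
        rw [key1 i hi] at h9
        exact hζKne1 (mul_right_cancel₀ (hr0 i) (by rw [h9, one_mul]))
      have hc1 : Nat.card (Subgroup.zpowers (σ ^ p ^ (i + 1))) = p ^ (n - (i + 1)) := by
        rw [Nat.card_zpowers, hord_pow (i + 1) (by omega)]
      have hc2 : Nat.card (Subgroup.zpowers (σ ^ p ^ i)) = p ^ (n - i) := by
        rw [Nat.card_zpowers, hord_pow i hi.le]
      have hdvd1 : p ^ (n - (i + 1)) ∣ Nat.card (IntermediateField.fixingSubgroup E) := by
        rw [← hc1]
        exact Subgroup.card_dvd_of_le hN1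
      have hdvd2 : Nat.card (IntermediateField.fixingSubgroup E) ∣ p ^ (n - i) := by
        rw [← hc2]
        exact Subgroup.card_dvd_of_le hN2
      obtain ⟨t, htle, hteq⟩ := (Nat.dvd_prime_pow hp).mp hdvd2
      have htne : t ≠ n - i := by
        intro h
        have h10 := subgroup_eq_of_le_of_card_eq' hN2 (by rw [hteq, h, hc2])
        exact hNne (h10 ▸ Subgroup.mem_zpowers _)
      have ht1 : n - 1 - i ≤ t := by
        rw [hteq] at hdvd1
        have := (Nat.pow_dvd_pow_iff_le_right hp1).mp hdvd1
        omega
      have hteq' : t = n - (i + 1) := by omega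
      have hcardeq : Nat.card (Subgroup.zpowers (σ ^ p ^ (i + 1)))
          = Nat.card (IntermediateField.fixingSubgroup E) := by
        rw [hteq, hteq', hc1]
      have hNeq : Subgroup.zpowers (σ ^ p ^ (i + 1)) = IntermediateField.fixingSubgroup E :=
        subgroup_eq_of_le_of_card_eq' hN1 hcardeq
      calc Ki (i + 1) = IntermediateField.fixedField (Subgroup.zpowers (σ ^ p ^ (i + 1))) :=
            hfix (i + 1) (by omega)
      _ = IntermediateField.fixedField (IntermediateField.fixingSubgroup E) := by rw [hNeq]
      _ = E := IsGalois.fixedField_fixingSubgroup E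
  · -- (3) norm compatibility
    intro j i hji hi
    have hjn : j ≤ n := by omega
    have hin : i ≤ n := by omega
    letI instA : Algebra ↥(Ki j) ↥(Ki i) :=
      ((IntermediateField.inclusion (hchain j i hji.le hi.le)).toRingHom).toAlgebra
    have hσpjmem : σ ^ p ^ j ∈ IntermediateField.fixingSubgroup (Ki j) := by
      rw [hfixing j hjn]; exact Subgroup.mem_zpowers _
    set gg : K ≃ₐ[↥(Ki j)] K :=
      IntermediateField.fixingSubgroupEquiv (Ki j) ⟨σ ^ p ^ j, hσpjmem⟩ with hggdef
    have hgg : ∀ x : K, gg x = (σ ^ p ^ j) x := fun _ => rfl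
    have hggpow : ∀ (m : ℕ) (x : K), (gg ^ m) x = ((σ ^ p ^ j) ^ m) x := by
      intro m
      induction m with
      | zero => intro x; rfl
      | succ m ih =>
          intro x
          rw [pow_succ, AlgEquiv.mul_apply, hgg, ih ((σ ^ p ^ j) x), ← AlgEquiv.mul_apply,
            ← pow_succ]
    have hgen : ∀ φ : K ≃ₐ[↥(Ki j)] K, φ ∈ Subgroup.zpowers gg := by
      intro φ
      have hψ : (((IntermediateField.fixingSubgroupEquiv (Ki j)).symm φ :
          (Ki j).fixingSubgroup) : K ≃ₐ[F] K) ∈ Subgroup.zpowers (σ ^ p ^ j) := by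
        rw [← hfixing j hjn]
        exact ((IntermediateField.fixingSubgroupEquiv (Ki j)).symm φ).2
      obtain ⟨k, hk⟩ := hψ
      refine ⟨k, ?_⟩
      have h11 : (⟨σ ^ p ^ j, hσpjmem⟩ : (Ki j).fixingSubgroup) ^ k
          = (IntermediateField.fixingSubgroupEquiv (Ki j)).symm φ := by
        apply Subtype.ext
        rw [← hk]
        rfl
      calc gg ^ k = IntermediateField.fixingSubgroupEquiv (Ki j)
            ((⟨σ ^ p ^ j, hσpjmem⟩ : (Ki j).fixingSubgroup) ^ k) :=
            (map_zpow _ _ _).symm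
      _ = φ := by rw [h11, MulEquiv.apply_symm_apply]
    set H2 : Subgroup (K ≃ₐ[↥(Ki j)] K) := Subgroup.zpowers (gg ^ p ^ (i - j)) with hH2def
    haveI hH2n : H2.Normal := normal_of_gen hgen H2
    set EE := IntermediateField.fixedField H2 with hEEdef
    have hpji : p ^ j * p ^ (i - j) = p ^ i := by rw [← pow_add]; congr 1; omega
    have hggPI : ∀ x : K, (gg ^ p ^ (i - j)) x = (σ ^ p ^ i) x := by
      intro x
      rw [hggpow, ← pow_mul, hpji]
    have hEEmem : ∀ x : K, (x ∈ EE ↔ x ∈ Ki i) := by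
      intro x
      constructor
      · intro hx
        refine (hmem i hin x).mpr ?_
        have h12 : (gg ^ p ^ (i - j)) x = x := hx ⟨gg ^ p ^ (i - j), Subgroup.mem_zpowers _⟩
        rwa [hggPI x] at h12
      · intro hx
        rintro ⟨g, k, rfl⟩
        show ((gg ^ p ^ (i - j)) ^ k) • x = x
        rw [AlgEquiv.smul_def]
        refine alg_zpow_fixed _ x ?_ k
        rw [hggPI x]
        exact (hmem i hin x).mp hx
    haveI : IsGalois ↥(Ki j) ↥EE := IsGalois.of_fixedField_normal_subgroup H2
    set e : ↥(Ki i) ≃+* ↥EE :=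
      { toFun := fun x => ⟨x.1, (hEEmem x.1).mpr x.2⟩
        invFun := fun y => ⟨y.1, (hEEmem y.1).mp y.2⟩
        left_inv := fun _ => rfl
        right_inv := fun _ => rfl
        map_mul' := fun _ _ => rfl
        map_add' := fun _ _ => rfl } with hedef
    dsimp only
    rw [dif_pos hi, dif_pos (show j < n by omega)]
    have htrans := norm_transfer (R := ↥(Ki j)) e (fun w => rfl) ⟨r i ^ p, hamem i hi⟩
    rw [htrans]
    set y0 : ↥EE := e ⟨r i ^ p, hamem i hi⟩ with hy0def
    -- ρ : the restriction of gg to EE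
    set ρ : ↥EE ≃ₐ[↥(Ki j)] ↥EE := AlgEquiv.restrictNormalHom ↥EE gg with hρdef
    have hρval : ∀ (ψ : K ≃ₐ[↥(Ki j)] K) (y : ↥EE),
        ((AlgEquiv.restrictNormalHom ↥EE ψ y : ↥EE) : K) = ψ (y : K) := by
      intro ψ y
      have h13 := AlgEquiv.restrictNormal_commutes ψ ↥EE y
      rwa [IntermediateField.algebraMap_apply, IntermediateField.algebraMap_apply] at h13
    have hρgen : ∀ φ : ↥EE ≃ₐ[↥(Ki j)] ↥EE, φ ∈ Subgroup.zpowers ρ := by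
      intro φ
      obtain ⟨ψ, hψ⟩ := AlgEquiv.restrictNormalHom_surjective K φ
      obtain ⟨k, hk⟩ := hgen ψ
      replace hk : gg ^ k = ψ := hk
      refine ⟨k, ?_⟩
      show ρ ^ k = φ
      have h12' : ρ ^ k = AlgEquiv.restrictNormalHom ↥EE (gg ^ k) :=
        (map_zpow (AlgEquiv.restrictNormalHom ↥EE) gg k).symm
      rw [h12', hk, hψ]
    have hρM : ρ ^ p ^ (i - j) = 1 := by
      apply AlgEquiv.ext
      intro y
      apply Subtype.val_injective
      rw [AlgEquiv.one_apply]
      have h13 : ρ ^ p ^ (i - j) = AlgEquiv.restrictNormalHom ↥EE (gg ^ p ^ (i - j)) := by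
        rw [hρdef, map_pow]
      rw [h13, hρval, hggPI]
      exact (hmem i hin y.1).mp ((hEEmem y.1).mp y.2)
    have hordρ : orderOf ρ = p ^ (i - j) := by
      have hdvd := orderOf_dvd_of_pow_eq_one hρM
      obtain ⟨t, htle, hteq⟩ := (Nat.dvd_prime_pow hp).mp hdvd
      rcases Nat.lt_or_ge t (i - j) with hlt | hge
      · exfalso
        have hd2 : orderOf ρ ∣ p ^ (i - j - 1) := by
          rw [hteq]; exact pow_dvd_pow p (by omega)
        have h14 : ρ ^ p ^ (i - j - 1) = 1 := orderOf_dvd_iff_pow_eq_one.mp hd2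
        have hri1mem : r (i - 1) ∈ Ki i := by
          have h15 := hrmem (i - 1) (by omega)
          have h15' : i - 1 + 1 = i := by omega
          rwa [h15'] at h15
        set y : ↥EE := ⟨r (i - 1), (hEEmem _).mpr hri1mem⟩ with hydef
        have h16 := congrArg (fun φ : ↥EE ≃ₐ[↥(Ki j)] ↥EE => ((φ y : ↥EE) : K)) h14
        have h17 : ρ ^ p ^ (i - j - 1)
            = AlgEquiv.restrictNormalHom ↥EE (gg ^ p ^ (i - j - 1)) := by
          rw [hρdef, map_pow]
        rw [h17, hρval, AlgEquiv.one_apply] at h16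
        have hycoe : (y : K) = r (i - 1) := rfl
        rw [hycoe, hggpow, ← pow_mul] at h16
        have h18 : p ^ j * p ^ (i - j - 1) = p ^ (i - 1) := by
          rw [← pow_add]; congr 1; omega
        rw [h18, key1 (i - 1) (by omega)] at h16
        exact hζKne1 (mul_right_cancel₀ (hr0 (i - 1)) (by rw [h16, one_mul]))
      · rw [hteq]
        congr 1
        omega
    -- term values
    have hterm : ∀ v : ℕ, (((ρ ^ v) y0 : ↥EE) : K) = (σ ^ (p ^ j * v)) (r i ^ p) := by
      intro v
      have h19 : ρ ^ v = AlgEquiv.restrictNormalHom ↥EE (gg ^ v) := by rw [hρdef, map_pow]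
      have h20 : (y0 : K) = r i ^ p := rfl
      rw [h19, hρval, h20, hggpow, ← pow_mul]
    -- the product over the automorphism group
    have hbij : ∏ φ : ↥EE ≃ₐ[↥(Ki j)] ↥EE, ((φ y0 : ↥EE) : K)
        = ∏ v ∈ Finset.range (orderOf ρ), (((ρ ^ v) y0 : ↥EE) : K) := by
      refine (Finset.prod_bij (fun v _ => ρ ^ v) (fun v _ => Finset.mem_univ _) ?_ ?_ ?_).symm
      · intro v hv w hw hvw
        exact pow_injOn_Iio_orderOf (Finset.mem_range.mp hv) (Finset.mem_range.mp hw) hvw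
      · intro φ _
        have hφ := hρgen φ
        rw [← mem_powers_iff_mem_zpowers] at hφ
        obtain ⟨m, hm⟩ := hφ
        replace hm : ρ ^ m = φ := hm
        refine ⟨m % orderOf ρ, Finset.mem_range.mpr (Nat.mod_lt _ (orderOf_pos ρ)), ?_⟩
        show ρ ^ (m % orderOf ρ) = φ
        rw [pow_mod_orderOf, hm]
      · intro v _
        rfl
    -- reindexing the double product
    have hreindex : ∏ v ∈ Finset.range (p ^ (i - j)), (σ ^ (p ^ j * v)) (r i) = r j := by
      have hVU : p ^ (n - 1 - j) = p ^ (i - j) * p ^ (n - 1 - i) := by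
        rw [← pow_add]; congr 1; omega
      have hL : ∀ v : ℕ, (σ ^ (p ^ j * v)) (r i)
          = ∏ u ∈ Finset.range (p ^ (n - 1 - i)), (σ ^ (p ^ j * v + p ^ i * u)) α := by
        intro v
        rw [hrval i, map_prod]
        exact Finset.prod_congr rfl fun u _ => by rw [hσapply]
      calc ∏ v ∈ Finset.range (p ^ (i - j)), (σ ^ (p ^ j * v)) (r i)
          = ∏ v ∈ Finset.range (p ^ (i - j)), ∏ u ∈ Finset.range (p ^ (n - 1 - i)),
              (σ ^ (p ^ j * v + p ^ i * u)) α := Finset.prod_congr rfl fun v _ => hL v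
      _ = ∏ u ∈ Finset.range (p ^ (n - 1 - i)), ∏ v ∈ Finset.range (p ^ (i - j)),
              (σ ^ (p ^ j * v + p ^ i * u)) α := Finset.prod_comm
      _ = ∏ w ∈ Finset.range (p ^ (i - j) * p ^ (n - 1 - i)), (σ ^ (p ^ j * w)) α := by
          rw [prod_range_mul' (fun w => (σ ^ (p ^ j * w)) α)]
          refine Finset.prod_congr rfl fun u _ => Finset.prod_congr rfl fun v _ => ?_
          congr 2
          rw [Nat.mul_add, ← Nat.mul_assoc, hpji, Nat.add_comm]
      _ = r j := by
          rw [hrval j]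
          exact (Finset.prod_congr (by rw [hVU]) fun w _ => rfl).symm
    -- norm as product of automorphisms
    have hnormEq := Algebra.norm_eq_prod_automorphisms (K := ↥(Ki j)) (L := ↥EE) y0
    have h21 : ((Algebra.norm ↥(Ki j) y0 : ↥(Ki j)) : K)
        = ∏ φ : ↥EE ≃ₐ[↥(Ki j)] ↥EE, ((φ y0 : ↥EE) : K) := by
      have h22 := congrArg (algebraMap ↥EE K) hnormEq
      rw [map_prod, ← IsScalarTower.algebraMap_apply] at h22
      simp_rw [IntermediateField.algebraMap_apply] at h22
      exact h22
    refine Subtype.ext ?_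
    rw [h21, hbij]
    have h23 : ∀ v ∈ Finset.range (orderOf ρ), (((ρ ^ v) y0 : ↥EE) : K)
        = ((σ ^ (p ^ j * v)) (r i)) ^ p := fun v _ => by
      rw [hterm v]; exact map_pow _ _ _
    rw [Finset.prod_congr rfl h23, Finset.prod_pow, hordρ, hreindex]


end PC
end

section
/- Suppose ξ_p ∈ F and, if p = 2, that either n > 1 or -1 ∈ N_{K/F}(K^×). Then there exists δ ∈ K^× with [N_{K/F}(δ)]_F ≠ [1]_F; consequently i(K/F) is well defined and an exceptional element of K/F exists. -/
namespace PC

/-- Key lemma: existence of an element of `K^×` whose norm is not a `p`th power in `F`. -/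
lemma key_norm
    (p n : ℕ) (hp : p.Prime) (hn : 1 ≤ n)
    (F K : Type) [Field F] [Field K] [Algebra F K]
    [FiniteDimensional F K] [IsGalois F K]
    (σ : K ≃ₐ[F] K) (hσ : ∀ τ : K ≃ₐ[F] K, τ ∈ Subgroup.zpowers σ)
    (hG : Nat.card (K ≃ₐ[F] K) = p ^ n)
    (hξ : ∃ ζ : F, IsPrimitiveRoot ζ p)
    (hp2 : p = 2 → 1 < n ∨ ∃ x : K, Algebra.norm F x = -1) :
    ∃ δ : Kˣ, ∀ f : F, f ^ p ≠ Algebra.norm F (δ : K) := by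
  by_contra hcon
  push_neg at hcon
  obtain ⟨ζ, hζ⟩ := hξ
  have : NeZero p := ⟨hp.ne_zero⟩
  set ξ : K := algebraMap F K ζ with hξdef
  have hξprim : IsPrimitiveRoot ξ p := hζ.map_of_injective (algebraMap F K).injective
  have hξp : ξ ^ p = 1 := hξprim.pow_eq_one
  have hξ1 : ξ ≠ 1 := hξprim.ne_one hp.one_lt
  have hξ0 : ξ ≠ 0 := by
    intro h
    exact one_ne_zero (α := K) (by rw [← hξp, h, zero_pow hp.ne_zero])
  have hσξ : ∀ τ : K ≃ₐ[F] K, τ ξ = ξ := fun τ => τ.commutes ζ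
  -- the order of σ is p^n
  have hzt : Subgroup.zpowers σ = ⊤ := by
    rw [Subgroup.eq_top_iff']; exact hσ
  have hord : orderOf σ = p ^ n := by
    rw [← Nat.card_zpowers, hzt, ← hG]
    exact Nat.card_congr Subgroup.topEquiv.toEquiv
  set m := p ^ (n - 1) with hm
  have hmp : m * p = p ^ n := by
    rw [hm, ← pow_succ, Nat.sub_add_cancel hn]
  have hτord : orderOf (σ ^ m) = p := by
    rw [orderOf_pow, hord, hm, Nat.gcd_eq_right (pow_dvd_pow p (Nat.sub_le n 1)),
      Nat.pow_div (Nat.sub_le n 1) hp.pos, Nat.sub_sub_self hn, pow_one]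
  -- Lagrange resolvent : an element B with (σ^m) B = ξ B
  have hres : ∃ θ : K, (∑ j ∈ Finset.range p, ξ ^ (p - j) * ((σ ^ m) ^ j) θ) ≠ 0 := by
    by_contra hall
    push_neg at hall
    have hinj : Function.Injective
        (fun j : Fin p => (((σ ^ m) ^ (j : ℕ) : K ≃ₐ[F] K) : K →* K)) := by
      intro i j h
      have h2 : ((σ ^ m) ^ (i : ℕ) : K ≃ₐ[F] K) = (σ ^ m) ^ (j : ℕ) := by
        apply AlgEquiv.ext
        intro x
        exact DFunLike.congr_fun h x
      have h3 := pow_injOn_Iio_orderOf (x := σ ^ m)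
        (by rw [hτord]; exact i.2) (by rw [hτord]; exact j.2) h2
      exact Fin.ext h3
    have hli : LinearIndependent K
        (fun j : Fin p => ((((σ ^ m) ^ (j : ℕ) : K ≃ₐ[F] K) : K →* K) : K → K)) :=
      (linearIndependent_monoidHom K K).comp _ hinj
    have hzero : (∑ j : Fin p, (ξ ^ (p - (j : ℕ))) •
        ((((σ ^ m) ^ (j : ℕ) : K ≃ₐ[F] K) : K →* K) : K → K)) = 0 := by
      funext θ
      have := hall θ
      simpa [Finset.sum_apply, Fin.sum_univ_eq_sum_range
        (fun j : ℕ => ξ ^ (p - j) * Nat.iterate (Nat.iterate (σ : K → K) m) j θ) p] using this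
    have := Fintype.linearIndependent_iff.mp hli (fun j => ξ ^ (p - (j : ℕ))) hzero
      ⟨0, hp.pos⟩
    simp only [Nat.sub_zero] at this
    exact one_ne_zero (α := K) (by rw [← hξp, this])
  obtain ⟨θ, hB0⟩ := hres
  set B : K := ∑ j ∈ Finset.range p, ξ ^ (p - j) * ((σ ^ m) ^ j) θ with hBdef
  have hτB : (σ ^ m) B = ξ * B := by
    set f : ℕ → K := fun j => ξ ^ (p - j + 1) * ((σ ^ m) ^ j) θ with hfdef
    have h1 : (σ ^ m) B = ∑ j ∈ Finset.range p, f (j + 1) := by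
      rw [hBdef, map_sum]
      refine Finset.sum_congr rfl fun j hj => ?_
      rw [Finset.mem_range] at hj
      rw [map_mul, map_pow, hσξ]
      show _ = ξ ^ (p - (j + 1) + 1) * ((σ ^ m) ^ (j + 1)) θ
      have hje : p - (j + 1) + 1 = p - j := by omega
      rw [hje, pow_succ', AlgEquiv.mul_apply]
    have h2 : ξ * B = ∑ j ∈ Finset.range p, f j := by
      rw [hBdef, Finset.mul_sum]
      refine Finset.sum_congr rfl fun j hj => ?_
      rw [hfdef]
      ring
    have hfp0 : f p = f 0 := by
      have hτp : ((σ ^ m) ^ p) θ = θ := by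
        rw [← hτord, pow_orderOf_eq_one]; rfl
      have hξ01 : ξ ^ (p - 0 + 1) = ξ ^ (p - p + 1) * ξ ^ p := by
        rw [← pow_add]; congr 1; omega
      simp only [hfdef, hτp, pow_zero, AlgEquiv.one_apply, hξ01, hξp]
      ring
    have e1 := Finset.sum_range_succ' f p
    have e2 := Finset.sum_range_succ f p
    rw [h1, h2]
    linear_combination e2 - e1 + hfp0
  -- the partial norm C
  set C : K := ∏ r ∈ Finset.range m, (σ ^ r) B with hCdef
  have hB0' : ∀ r : ℕ, (σ ^ r) B ≠ 0 := by
    intro r h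
    exact hB0 ((map_eq_zero_iff (σ ^ r) (σ ^ r).injective).mp h)
  have hC0 : C ≠ 0 := Finset.prod_ne_zero_iff.mpr fun r _ => hB0' r
  have hσC : σ C = ξ * C := by
    have h1 : σ C * B = C * (ξ * B) := by
      have e1 := Finset.prod_range_succ' (fun r => (σ ^ r) B) m
      have e2 := Finset.prod_range_succ (fun r => (σ ^ r) B) m
      have h2 : σ C = ∏ r ∈ Finset.range m, (σ ^ (r + 1)) B := by
        rw [hCdef, map_prod]
        refine Finset.prod_congr rfl fun r _ => ?_
        rw [pow_succ']
        rfl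
      have h3 : (σ ^ (0 : ℕ)) B = B := by rw [pow_zero]; rfl
      rw [h2]
      rw [h3] at e1
      rw [hτB] at e2
      rw [← e1, e2, hCdef]
    have := mul_right_cancel₀ hB0 (by rw [h1]; ring : σ C * B = (ξ * C) * B)
    exact this
  have hgm : ∀ i : ℕ, (σ ^ (i + m)) B = ξ * (σ ^ i) B := by
    intro i
    rw [pow_add, AlgEquiv.mul_apply, hτB, map_mul, hσξ]
  have hblock : ∀ q : ℕ, (∏ r ∈ Finset.range m, (σ ^ (m * q + r)) B) = ξ ^ (m * q) * C := by
    intro q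
    induction q with
    | zero => simp [hCdef]
    | succ q ih =>
      have h1 : ∀ r ∈ Finset.range m, (σ ^ (m * (q + 1) + r)) B = ξ * (σ ^ (m * q + r)) B := by
        intro r _
        rw [show m * (q + 1) + r = m * q + r + m by ring, hgm]
      rw [Finset.prod_congr rfl h1, Finset.prod_mul_distrib, Finset.prod_const,
        Finset.card_range, ih, ← mul_assoc, ← pow_add]
      congr 2
      ring
  have htot : ∀ t : ℕ, (∏ i ∈ Finset.range (m * t), (σ ^ i) B)
      = ξ ^ (m * ∑ q ∈ Finset.range t, q) * C ^ t := by
    intro t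
    induction t with
    | zero => simp
    | succ t ih =>
      rw [Nat.mul_succ, Finset.prod_range_add, ih, hblock t, Finset.sum_range_succ,
        Nat.mul_add, pow_add, pow_succ]
      ring
  set s : ℕ := ∑ q ∈ Finset.range p, q with hsdef
  have hNfull : algebraMap F K (Algebra.norm F B) = ξ ^ (m * s) * C ^ p := by
    rw [Algebra.norm_eq_prod_automorphisms]
    have hbij : Function.Bijective (fun i : Fin (p ^ n) => σ ^ (i : ℕ)) := by
      rw [Fintype.bijective_iff_injective_and_card]
      constructor
      · intro i j h
        exact Fin.ext (pow_injOn_Iio_orderOf (x := σ)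
          (by rw [hord]; exact i.2) (by rw [hord]; exact j.2) h)
      · rw [Fintype.card_fin, ← Nat.card_eq_fintype_card, hG]
    have h1 : (∏ τ : K ≃ₐ[F] K, τ B) = ∏ i : Fin (p ^ n), (σ ^ (i : ℕ)) B :=
      (Fintype.prod_bijective _ hbij _ _ (fun i => rfl)).symm
    rw [h1, Fin.prod_univ_eq_prod_range (fun i => (σ ^ i) B) (p ^ n), ← hmp, htot p]
  -- the final contradiction, given D with σ D = ξ D and f^p = D^p
  have final : ∀ (D : K) (f : F), D ≠ 0 → σ D = ξ * D →
      (algebraMap F K f) ^ p = D ^ p → False := by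
    intro D f hD0 hσD hfp
    have hf0 : algebraMap F K f ≠ 0 := by
      intro h
      rw [h, zero_pow hp.ne_zero] at hfp
      exact hD0 (pow_eq_zero_iff hp.ne_zero |>.mp hfp.symm)
    have hu : (D / algebraMap F K f) ^ p = 1 := by
      rw [div_pow, ← hfp, div_self (pow_ne_zero _ hf0)]
    obtain ⟨i, _, hi⟩ := hξprim.eq_pow_of_pow_eq_one hu
    have hD : D = ξ ^ i * algebraMap F K f := ((eq_div_iff hf0).mp hi).symm
    have hσD' : σ D = D := by
      rw [hD, map_mul, map_pow, hσξ, AlgEquiv.commutes]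
    rw [hσD'] at hσD
    exact hξ1 ((mul_left_eq_self₀.mp hσD.symm).resolve_right hD0)
  by_cases hdvd : p ∣ m * s
  · -- the exponent is divisible by p : take δ = B
    obtain ⟨k, hk⟩ := hdvd
    obtain ⟨f, hf⟩ := hcon (Units.mk0 B hB0)
    refine final (ξ ^ k * C) f (mul_ne_zero (pow_ne_zero _ hξ0) hC0) ?_ ?_
    · rw [map_mul, map_pow, hσξ, hσC]
      ring
    · rw [← map_pow, hf]
      show algebraMap F K (Algebra.norm F B) = _
      rw [hNfull, hk, mul_pow, ← pow_mul, mul_comm p k]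
  · -- p = 2 and n = 1
    have hp2' : p = 2 := by
      by_contra hodd
      refine hdvd (Dvd.dvd.mul_left ?_ m)
      have h2s : s * 2 = p * (p - 1) := Finset.sum_range_id_mul_two p
      have hpdvd : p ∣ s * 2 := by rw [h2s]; exact Dvd.intro _ rfl
      rcases (Nat.Prime.dvd_mul hp).mp hpdvd with h | h
      · exact h
      · exact absurd ((Nat.prime_dvd_prime_iff_eq hp Nat.prime_two).mp h) hodd
    have hn1 : n = 1 := by
      by_contra h
      refine hdvd (Dvd.dvd.mul_right ?_ s)
      rw [hm, hp2']
      exact dvd_pow_self 2 (by omega)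
    have hs1 : m * s = 1 := by
      rw [hm, hn1, hsdef, hp2']
      simp [Finset.sum_range_succ]
    have hξneg : ξ = -1 := by
      have h1 : (ξ - 1) * (ξ + 1) = 0 := by
        have h := hξp
        rw [hp2'] at h
        linear_combination h
      rcases mul_eq_zero.mp h1 with h | h
      · exact absurd (by linear_combination h) hξ1
      · linear_combination h
    obtain ⟨x, hx⟩ := (hp2 hp2').resolve_left (by omega)
    have hx0 : x ≠ 0 := by
      intro h
      rw [h, Algebra.norm_zero] at hx
      exact (neg_ne_zero.mpr (one_ne_zero (α := F))) hx.symm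
    obtain ⟨f, hf⟩ := hcon (Units.mk0 (x * B) (mul_ne_zero hx0 hB0))
    refine final C f hC0 hσC ?_
    rw [← map_pow, hf]
    show algebraMap F K (Algebra.norm F (x * B)) = _
    rw [map_mul (Algebra.norm F), map_mul, hNfull, hs1, pow_one, hξneg, hx, map_neg, map_one]
    ring

/-- **Proposition (existence of exceptional elements).** If `ξ_p ∈ F` and, for `p = 2`,
`n > 1` or `-1 ∈ N_{K/F}(K^×)`, then some `δ ∈ K^×` has nontrivial norm class; hence
`i(K/F)` is well defined and an exceptional element of `K/F` exists. -/
theorem statement_11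
    (p n : ℕ) (hp : p.Prime) (hn : 1 ≤ n)
    (F K : Type) [Field F] [Field K] [Algebra F K]
    [FiniteDimensional F K] [IsGalois F K]
    (σ : K ≃ₐ[F] K) (hσ : ∀ τ : K ≃ₐ[F] K, τ ∈ Subgroup.zpowers σ)
    (hG : Nat.card (K ≃ₐ[F] K) = p ^ n)
    (Ki : ℕ → IntermediateField F K)
    (hKideg : ∀ i, i ≤ n → Module.finrank F ↥(Ki i) = p ^ i)
    (hξ : ∃ ζ : F, IsPrimitiveRoot ζ p)
    (hp2 : p = 2 → 1 < n ∨ ∃ x : K, Algebra.norm F x = -1) :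
    (∃ δ : Kˣ, ∀ f : F, f ^ p ≠ Algebra.norm F (δ : K)) ∧
    ∃ m : WithBot ℕ, IsIdx p Ki m ∧ ∃ δ : Kˣ, IsExceptional p F Ki m δ := by
  obtain ⟨δ₀, hδ₀⟩ := key_norm p n hp hn F K σ hσ hG hξ hp2
  refine ⟨⟨δ₀, hδ₀⟩, ?_⟩
  -- `Ki n = ⊤`
  have htop : Ki n = ⊤ := by
    refine IntermediateField.eq_of_le_of_finrank_eq le_top ?_
    rw [hKideg n le_rfl, IntermediateField.finrank_top']
    rw [← IsGalois.card_aut_eq_finrank, hG]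
  -- the stage predicate holds at `m = n`
  have hstage_n : Stage p F (clsOfW p Ki (n : WithBot ℕ)) := by
    refine ⟨δ₀, fun y => hδ₀ y, fun τ => ?_⟩
    show _ ∈ clsOf p (Ki n)
    refine Subgroup.mem_map.mpr ⟨Units.map (τ : K →* K) δ₀ * δ₀⁻¹, ?_, rfl⟩
    show ((Units.map (τ : K →* K) δ₀ * δ₀⁻¹ : Kˣ) : K) ∈ Ki n
    rw [htop]
    exact IntermediateField.mem_top
  -- take the minimal stage
  set S : Set (WithBot ℕ) := {m | Stage p F (clsOfW p Ki m)} with hSdef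
  obtain ⟨m, hmS, hmin⟩ := (wellFounded_lt (α := WithBot ℕ)).has_min S ⟨(n : WithBot ℕ), hstage_n⟩
  obtain ⟨δ, h1, h2⟩ := hmS
  exact ⟨m, ⟨⟨δ, h1, h2⟩, fun i hi hstage => hmin i hstage hi⟩, δ, h1, h2⟩

end PC
end

section
/- (Exact Sequence Lemma) Let A = (F^× ∩ K^{×p})/F^{×p}. Then the sequence 1 → A → F^×/F^{×p} →^ε J^G →^N A is exact, where ε is induced by the inclusion F^× → K^× and N is induced by the norm N_{K/F}: K^× → F^×. Moreover: if ξ_p ∉ F then A = 1; if ξ_p ∈ F then A = ⟨[a]_F⟩, and in this case N is surjective if and only if ξ_p ∈ N_{K/F}(K^×). In particular: (i) if [β] ∈ [F^×] then [N_{K/F}(β)]_F = [1]_F; (ii) if [β] ∈ J^G and [N_{K/F}(β)]_F = [1]_F then [β] ∈ [F^×]. -/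
namespace PC

section helpers

variable {F K : Type} [Field F] [Field K] [Algebra F K]

noncomputable def uM (σ : K ≃ₐ[F] K) : Kˣ →* Kˣ := Units.map (σ : K →* K)

@[simp] lemma uM_apply (σ : K ≃ₐ[F] K) (u : Kˣ) : ((uM σ u : Kˣ) : K) = σ (u : K) := rfl

lemma uM_mul (σ τ : K ≃ₐ[F] K) (u : Kˣ) : uM (σ * τ) u = uM σ (uM τ u) := by
  ext; simp [AlgEquiv.mul_apply]

lemma uM_one (u : Kˣ) : uM (1 : K ≃ₐ[F] K) u = u := by
  ext; simp

lemma galJ_cls (p : ℕ) (σ : K ≃ₐ[F] K) (u : Kˣ) :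
    galJ p σ (cls p u) = cls p (uM σ u) := rfl

lemma cls_eq_one_iff (p : ℕ) (u : Kˣ) : cls p u = 1 ↔ ∃ v : Kˣ, v ^ p = u := by
  rw [cls, QuotientGroup.eq_one_iff]
  constructor
  · rintro ⟨v, hv⟩; exact ⟨v, hv⟩
  · rintro ⟨v, hv⟩; exact ⟨v, hv⟩

lemma cls_eq_iff (p : ℕ) (u v : Kˣ) : cls p u = cls p v ↔ ∃ w : Kˣ, v = u * w ^ p := by
  rw [cls, cls, QuotientGroup.eq]
  constructor
  · rintro ⟨w, hw⟩
    refine ⟨w, ?_⟩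
    have h : (powMonoidHom p) w = w ^ p := rfl
    rw [h] at hw
    rw [hw, mul_inv_cancel_left]
  · rintro ⟨w, rfl⟩
    exact ⟨w, by show w ^ p = _; rw [inv_mul_cancel_left]⟩

lemma galJ_mul (p : ℕ) (σ τ : K ≃ₐ[F] K) (z : Jgrp p K) :
    galJ p (σ * τ) z = galJ p σ (galJ p τ z) := by
  induction z using QuotientGroup.induction_on with
  | H u => rw [show (QuotientGroup.mk u : Jgrp p K) = cls p u from rfl,
      galJ_cls, galJ_cls, galJ_cls, uM_mul]

lemma galJ_one (p : ℕ) (z : Jgrp p K) : galJ p (1 : K ≃ₐ[F] K) z = z := by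
  induction z using QuotientGroup.induction_on with
  | H u => rw [show (QuotientGroup.mk u : Jgrp p K) = cls p u from rfl, galJ_cls, uM_one]

lemma fixJ_all (p : ℕ) {σ : K ≃ₐ[F] K} (hσ : ∀ τ : K ≃ₐ[F] K, τ ∈ Subgroup.zpowers σ)
    (z : Jgrp p K) (hz : galJ p σ z = z) : ∀ τ : K ≃ₐ[F] K, galJ p τ z = z := by
  intro τ
  let S : Subgroup (K ≃ₐ[F] K) :=
  { carrier := {τ | galJ p τ z = z}
    one_mem' := galJ_one p z
    mul_mem' := by
      intro a b ha hb
      show galJ p (a * b) z = z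
      rw [galJ_mul, hb, ha]
    inv_mem' := by
      intro a ha
      show galJ p a⁻¹ z = z
      conv_lhs => rw [← ha]
      rw [← galJ_mul, inv_mul_cancel, galJ_one] }
  have : Subgroup.zpowers σ ≤ S := Subgroup.zpowers_le.mpr hz
  exact this (hσ τ)

lemma fix_all {σ : K ≃ₐ[F] K} (hσ : ∀ τ : K ≃ₐ[F] K, τ ∈ Subgroup.zpowers σ)
    (x : K) (hx : σ x = x) : ∀ τ : K ≃ₐ[F] K, τ x = x := by
  intro τ
  have hle : Subgroup.zpowers σ ≤ MulAction.stabilizer (K ≃ₐ[F] K) x :=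
    Subgroup.zpowers_le.mpr hx
  exact hle (hσ τ)

noncomputable def cpow (σ : K ≃ₐ[F] K) (ω : Kˣ) (i : ℕ) : Kˣ :=
  ∏ j ∈ Finset.range i, uM (σ ^ j) ω

noncomputable def Wel (σ : K ≃ₐ[F] K) (N : ℕ) (ω : Kˣ) : Kˣ :=
  ∏ i ∈ Finset.range N, cpow σ ω i

lemma cpow_zero (σ : K ≃ₐ[F] K) (ω : Kˣ) : cpow σ ω 0 = 1 := by
  simp [cpow]

lemma cpow_one (σ : K ≃ₐ[F] K) (ω : Kˣ) : cpow σ ω 1 = ω := by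
  simp [cpow, uM_one]

lemma cpow_succ (σ : K ≃ₐ[F] K) (ω : Kˣ) (i : ℕ) :
    cpow σ ω (i + 1) = cpow σ ω i * uM (σ ^ i) ω := by
  simp [cpow, Finset.prod_range_succ]

lemma uM_cpow (σ : K ≃ₐ[F] K) (ω : Kˣ) (a i : ℕ) :
    uM (σ ^ a) (cpow σ ω i) = ∏ j ∈ Finset.range i, uM (σ ^ (a + j)) ω := by
  rw [cpow, map_prod]
  refine Finset.prod_congr rfl fun j _ => ?_
  rw [pow_add, uM_mul]

lemma cpow_add (σ : K ≃ₐ[F] K) (ω : Kˣ) (a b : ℕ) :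
    cpow σ ω (a + b) = cpow σ ω a * uM (σ ^ a) (cpow σ ω b) := by
  rw [uM_cpow, cpow, Finset.prod_range_add, cpow]

lemma cpow_mul_dist (σ : K ≃ₐ[F] K) (ω₁ ω₂ : Kˣ) (i : ℕ) :
    cpow σ (ω₁ * ω₂) i = cpow σ ω₁ i * cpow σ ω₂ i := by
  rw [cpow, cpow, cpow, ← Finset.prod_mul_distrib]
  exact Finset.prod_congr rfl fun j _ => map_mul _ _ _

lemma cpow_inv (σ : K ≃ₐ[F] K) (ω : Kˣ) (i : ℕ) :
    cpow σ ω⁻¹ i = (cpow σ ω i)⁻¹ := by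
  rw [cpow, cpow, ← Finset.prod_inv_distrib]
  exact Finset.prod_congr rfl fun j _ => map_inv _ _

lemma cpow_succ' (σ : K ≃ₐ[F] K) (ω : Kˣ) (i : ℕ) :
    uM σ (cpow σ ω i) = cpow σ ω (i + 1) * ω⁻¹ := by
  have h : uM σ (cpow σ ω i) = ∏ j ∈ Finset.range i, uM (σ ^ (j + 1)) ω := by
    rw [cpow, map_prod]
    refine Finset.prod_congr rfl fun j _ => ?_
    rw [pow_succ', uM_mul]
  rw [h]
  have h2 := Finset.prod_range_succ' (fun j => uM (σ ^ j) ω) i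
  have h3 : cpow σ ω (i + 1) = (∏ j ∈ Finset.range i, uM (σ ^ (j + 1)) ω) * uM (σ ^ 0) ω := h2
  rw [h3, pow_zero, uM_one]
  group

lemma uM_Wel (σ : K ≃ₐ[F] K) (N : ℕ) (ω : Kˣ) :
    uM σ (Wel σ N ω) = Wel σ N ω * cpow σ ω N * (ω ^ N)⁻¹ := by
  have h : uM σ (Wel σ N ω) = ∏ i ∈ Finset.range N, (cpow σ ω (i + 1) * ω⁻¹) := by
    rw [Wel, map_prod]
    exact Finset.prod_congr rfl fun i _ => cpow_succ' σ ω i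
  rw [h, Finset.prod_mul_distrib, Finset.prod_const, Finset.card_range]
  have h2 : ∏ i ∈ Finset.range N, cpow σ ω (i + 1) = Wel σ N ω * cpow σ ω N := by
    have h3 := Finset.prod_range_succ' (fun i => cpow σ ω i) N
    rw [Finset.prod_range_succ] at h3
    rw [cpow_zero, mul_one] at h3
    rw [← h3, Wel]
  rw [h2, inv_pow]

lemma uM_pow_u (σ : K ≃ₐ[F] K) (p : ℕ) (u ω : Kˣ) (hω : uM σ u = u * ω ^ p) (i : ℕ) :
    uM (σ ^ i) u = u * (cpow σ ω i) ^ p := by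
  induction i with
  | zero => rw [pow_zero, uM_one, cpow_zero, one_pow, mul_one]
  | succ i ih =>
    have h : uM (σ ^ (i + 1)) u = uM (σ ^ i) (uM σ u) := by rw [← uM_mul, ← pow_succ]
    rw [h, hω, map_mul, ih, map_pow, cpow_succ, mul_pow, mul_assoc]

lemma norm_eq_W (σ : K ≃ₐ[F] K) (p N : ℕ) (u ω : Kˣ) (hω : uM σ u = u * ω ^ p) :
    ∏ i ∈ Finset.range N, uM (σ ^ i) u = u ^ N * (Wel σ N ω) ^ p := by
  have h : ∀ i ∈ Finset.range N, uM (σ ^ i) u = u * (cpow σ ω i) ^ p :=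
    fun i _ => uM_pow_u σ p u ω hω i
  rw [Finset.prod_congr rfl h, Finset.prod_mul_distrib, Finset.prod_const, Finset.card_range,
    Finset.prod_pow, Wel]

end helpers

section galois

variable {F K : Type} [Field F] [Field K] [Algebra F K] [FiniteDimensional F K] [IsGalois F K]
variable {σ : K ≃ₐ[F] K} {N : ℕ}

lemma fixed_elem (x : K) (hx : ∀ τ : K ≃ₐ[F] K, τ x = x) :
    ∃ g : F, algebraMap F K g = x := by
  have hbot : IntermediateField.fixedField (⊤ : Subgroup (K ≃ₐ[F] K)) = ⊥ :=
    ((IsGalois.tfae (F := F) (E := K)).out 0 1).mp (inferInstance : IsGalois F K)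
  have hmem : x ∈ IntermediateField.fixedField (⊤ : Subgroup (K ≃ₐ[F] K)) := fun τ => hx τ.1
  rw [hbot, IntermediateField.mem_bot] at hmem
  exact hmem

lemma ord_sigma (hσ : ∀ τ : K ≃ₐ[F] K, τ ∈ Subgroup.zpowers σ)
    (hG : Nat.card (K ≃ₐ[F] K) = N) : orderOf σ = N := by
  rw [orderOf_eq_card_of_forall_mem_zpowers hσ, hG]

lemma exists_pow_lt (hσ : ∀ τ : K ≃ₐ[F] K, τ ∈ Subgroup.zpowers σ)
    (hG : Nat.card (K ≃ₐ[F] K) = N) (hN : 0 < N) (τ : K ≃ₐ[F] K) :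
    ∃ i < N, σ ^ i = τ := by
  obtain ⟨z, rfl⟩ := hσ τ
  have hord := ord_sigma hσ hG
  have hσN : σ ^ N = 1 := by rw [← hord]; exact pow_orderOf_eq_one σ
  have hNz : (N : ℤ) ≠ 0 := by exact_mod_cast hN.ne'
  have h0 : 0 ≤ z % (N : ℤ) := Int.emod_nonneg z hNz
  have h1 : z % (N : ℤ) < N := Int.emod_lt_of_pos z (by exact_mod_cast hN)
  refine ⟨(z % (N : ℤ)).toNat, by omega, ?_⟩
  calc σ ^ ((z % (N : ℤ)).toNat)
      = σ ^ (z % (N : ℤ)) := by rw [← zpow_natCast, Int.toNat_of_nonneg h0]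
    _ = σ ^ ((N : ℤ) * (z / N)) * σ ^ (z % (N : ℤ)) := by
        rw [zpow_mul, zpow_natCast, hσN, one_zpow, one_mul]
    _ = σ ^ ((N : ℤ) * (z / N) + z % N) := (zpow_add σ _ _).symm
    _ = σ ^ z := by rw [Int.mul_ediv_add_emod]

lemma prod_univ_eq (hσ : ∀ τ : K ≃ₐ[F] K, τ ∈ Subgroup.zpowers σ)
    (hG : Nat.card (K ≃ₐ[F] K) = N) (hN : 0 < N) {M : Type} [CommMonoid M]
    (f : (K ≃ₐ[F] K) → M) :
    ∏ τ : K ≃ₐ[F] K, f τ = ∏ i ∈ Finset.range N, f (σ ^ i) := by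
  have hord := ord_sigma hσ hG
  refine (Finset.prod_bij (fun (i : ℕ) (_ : i ∈ Finset.range N) => σ ^ i) ?_ ?_ ?_ ?_).symm
  · intro i _; exact Finset.mem_univ _
  · intro i hi j hj hij
    have hmod := pow_eq_pow_iff_modEq.mp hij
    rw [hord] at hmod
    rw [Finset.mem_range] at hi hj
    have := hmod.eq_of_lt_of_lt hi hj
    exact this
  · intro τ _
    obtain ⟨i, hi, hτ⟩ := exists_pow_lt hσ hG hN τ
    exact ⟨i, Finset.mem_range.mpr hi, hτ⟩
  · intro i _; rfl

lemma Nu_val (hσ : ∀ τ : K ≃ₐ[F] K, τ ∈ Subgroup.zpowers σ)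
    (hG : Nat.card (K ≃ₐ[F] K) = N) (hN : 0 < N) (u : Kˣ) :
    ((∏ i ∈ Finset.range N, uM (σ ^ i) u : Kˣ) : K)
      = algebraMap F K (Algebra.norm F (u : K)) := by
  rw [Algebra.norm_eq_prod_automorphisms]
  rw [prod_univ_eq hσ hG hN (fun τ => τ (u : K))]
  rw [← Units.coeHom_apply, map_prod]
  rfl

lemma root_fixed {p n : ℕ} (hp : p.Prime)
    (hG : Nat.card (K ≃ₐ[F] K) = p ^ n) (μ : Kˣ) (hμ : μ ^ p = 1) :
    uM σ μ = μ := by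
  haveI : NeZero p := ⟨hp.ne_zero⟩
  haveI := Fact.mk hp
  have hdvd : orderOf μ ∣ p := orderOf_dvd_of_pow_eq_one hμ
  rcases hp.eq_one_or_self_of_dvd _ hdvd with hord | hord
  · have h1 : μ = 1 := orderOf_eq_one_iff.mp hord
    rw [h1, map_one]
  · have hprim : IsPrimitiveRoot μ p := by
      rw [← hord]; exact IsPrimitiveRoot.orderOf μ
    have hprimK : IsPrimitiveRoot (μ : K) p := IsPrimitiveRoot.coe_units_iff.mpr hprim
    have hμK : ((μ : K)) ^ p = 1 := by simpa using congrArg Units.val hμ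
    have hσμp : (σ (μ : K)) ^ p = 1 := by rw [← map_pow, hμK, map_one]
    obtain ⟨c, _, hc⟩ := hprimK.eq_pow_of_pow_eq_one hσμp
    have hpc : ¬ p ∣ c := by
      intro hdv
      have h1 : (μ : K) ^ c = 1 := (hprimK.pow_eq_one_iff_dvd c).mpr hdv
      have h2 : σ (μ : K) = σ 1 := by rw [map_one, ← hc, h1]
      have h3 : (μ : K) = 1 := σ.injective h2
      have h4 : p = orderOf ((μ : K)) := hprimK.eq_orderOf
      rw [h3, orderOf_one] at h4
      exact hp.one_lt.ne' h4
    have hiter : ∀ k : ℕ, (σ ^ k) (μ : K) = (μ : K) ^ (c ^ k) := by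
      intro k
      induction k with
      | zero => simp
      | succ k ih =>
        have h1 : (σ ^ (k + 1)) (μ : K) = σ ((σ ^ k) (μ : K)) := by
          rw [pow_succ']; rfl
        rw [h1, ih, map_pow, ← hc, ← pow_mul, ← pow_succ']
    have hσN : σ ^ (p ^ n) = 1 := by
      have := pow_card_eq_one' (G := K ≃ₐ[F] K) (x := σ)
      rwa [hG] at this
    have hfix : (μ : K) ^ (c ^ (p ^ n)) = (μ : K) := by
      rw [← hiter, hσN]; rfl
    have hu : μ ^ (c ^ (p ^ n)) = μ ^ 1 := by
      ext; push_cast; rw [hfix]; rw [pow_one]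
    have hmod : c ^ (p ^ n) ≡ 1 [MOD p] := by
      have := pow_eq_pow_iff_modEq.mp hu
      rwa [hord] at this
    have h1 : ((c : ZMod p)) ^ (p ^ n) = 1 := by
      have h := (ZMod.natCast_eq_natCast_iff _ _ _).mpr hmod
      push_cast at h
      exact h
    have hc0 : (c : ZMod p) ≠ 0 := by
      rw [Ne, ZMod.natCast_eq_zero_iff]; exact hpc
    have h2 : ((c : ZMod p)) ^ (p - 1) = 1 := ZMod.pow_card_sub_one_eq_one hc0
    have hd1 : orderOf ((c : ZMod p)) ∣ p ^ n := orderOf_dvd_of_pow_eq_one h1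
    have hd2 : orderOf ((c : ZMod p)) ∣ p - 1 := orderOf_dvd_of_pow_eq_one h2
    have hcop : Nat.Coprime (p ^ n) (p - 1) := by
      refine Nat.Coprime.pow_left n ?_
      have d1 : Nat.gcd p (p - 1) ∣ p := Nat.gcd_dvd_left _ _
      have d2 : Nat.gcd p (p - 1) ∣ p - 1 := Nat.gcd_dvd_right _ _
      have d3 := Nat.dvd_sub d1 d2
      rw [Nat.sub_sub_self hp.one_le] at d3
      exact Nat.coprime_iff_gcd_eq_one.mpr (Nat.dvd_one.mp d3)
    have horder1 : orderOf ((c : ZMod p)) = 1 :=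
      Nat.dvd_one.mp (hcop ▸ Nat.dvd_gcd hd1 hd2)
    have hc1 : (c : ZMod p) = 1 := orderOf_eq_one_iff.mp horder1
    have hmodc : c ≡ 1 [MOD p] := by
      have := (ZMod.natCast_eq_natCast_iff c 1 p).mp (by push_cast; exact hc1)
      exact this
    have hμc : μ ^ c = μ ^ 1 := by
      refine pow_eq_pow_iff_modEq.mpr ?_
      rwa [hord]
    ext
    rw [uM_apply, ← hc]
    have : ((μ ^ c : Kˣ) : K) = ((μ ^ 1 : Kˣ) : K) := congrArg Units.val hμc
    push_cast at this
    rw [this, pow_one]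

lemma root_in_F {p n : ℕ} (hp : p.Prime)
    (hσ : ∀ τ : K ≃ₐ[F] K, τ ∈ Subgroup.zpowers σ)
    (hG : Nat.card (K ≃ₐ[F] K) = p ^ n) (μ : Kˣ) (hμ : μ ^ p = 1) :
    ∃ m : F, algebraMap F K m = (μ : K) ∧ m ^ p = 1 := by
  have h1 : σ (μ : K) = (μ : K) := by
    have := root_fixed (σ := σ) hp hG μ hμ
    have h2 := congrArg Units.val this
    rwa [uM_apply] at h2
  obtain ⟨m, hm⟩ := fixed_elem (μ : K) (fix_all hσ (μ : K) h1)
  refine ⟨m, hm, ?_⟩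
  have hinj := (algebraMap F K).injective
  apply hinj
  rw [map_pow, hm, map_one]
  simpa using congrArg Units.val hμ

lemma hilbert90_cyclic (hσ : ∀ τ : K ≃ₐ[F] K, τ ∈ Subgroup.zpowers σ)
    (hG : Nat.card (K ≃ₐ[F] K) = N) (hN : 0 < N) (ω : Kˣ) (hnorm : cpow σ ω N = 1) :
    ∃ z : Kˣ, uM σ z = z * ω := by
  have hord := ord_sigma hσ hG
  have hex : ∀ τ : K ≃ₐ[F] K, ∃ i, σ ^ i = τ := fun τ => by
    obtain ⟨i, _, h⟩ := exists_pow_lt hσ hG hN τ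
    exact ⟨i, h⟩
  let idx : (K ≃ₐ[F] K) → ℕ := fun τ => Classical.choose (hex τ)
  have hidx : ∀ τ, σ ^ (idx τ) = τ := fun τ => Classical.choose_spec (hex τ)
  have hcN : ∀ i, cpow σ ω (i + N) = cpow σ ω i := by
    intro i
    rw [cpow_add, hnorm, map_one, mul_one]
  have key : ∀ i k, cpow σ ω (i + k * N) = cpow σ ω i := by
    intro i k
    induction k with
    | zero => rw [Nat.zero_mul, Nat.add_zero]
    | succ k ih => rw [Nat.succ_mul, ← Nat.add_assoc, hcN, ih]
  have hwd : ∀ i j, σ ^ i = σ ^ j → cpow σ ω i = cpow σ ω j := by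
    have haux : ∀ i j, i ≤ j → i ≡ j [MOD N] → cpow σ ω i = cpow σ ω j := by
      intro i j hle hmod
      obtain ⟨k, hk⟩ := (Nat.modEq_iff_dvd' hle).mp hmod
      have hj : j = i + k * N := by rw [Nat.mul_comm]; omega
      rw [hj, key]
    intro i j hij
    have hmod : i ≡ j [MOD N] := by
      have := pow_eq_pow_iff_modEq.mp hij
      rwa [hord] at this
    rcases le_total i j with h | h
    · exact haux i j h hmod
    · exact (haux j i h hmod.symm).symm
  let f : (K ≃ₐ[F] K) → Kˣ := fun τ => cpow σ ω (idx τ)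
  have hcoc : groupCohomology.IsMulCocycle₁ f := by
    intro g h
    show cpow σ ω (idx (g * h)) = g • cpow σ ω (idx h) * cpow σ ω (idx g)
    rw [AlgEquiv.smul_units_def]
    have h1 : σ ^ (idx (g * h)) = σ ^ (idx g + idx h) := by
      rw [pow_add, hidx, hidx, hidx]
    rw [hwd _ _ h1, cpow_add, hidx]
    exact mul_comm _ _
  obtain ⟨β, hβ⟩ :=
    groupCohomology.isMulCoboundary₁_of_isMulCocycle₁_of_aut_to_units f hcoc
  have hfσ : f σ = ω := by
    show cpow σ ω (idx σ) = ω
    rw [hwd (idx σ) 1 (by rw [hidx, pow_one]), cpow_one]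
  have h2 := hβ σ
  rw [AlgEquiv.smul_units_def, hfσ] at h2
  refine ⟨β, ?_⟩
  have h3 : Units.map (σ : K →* K) β = ω * β := by
    rw [div_eq_iff_eq_mul] at h2
    exact h2
  show Units.map (σ : K →* K) β = β * ω
  rw [h3, mul_comm]

lemma cpow_pow (σ : K ≃ₐ[F] K) (ω : Kˣ) (k i : ℕ) :
    cpow σ (ω ^ k) i = (cpow σ ω i) ^ k := by
  rw [cpow, cpow, ← Finset.prod_pow]
  exact Finset.prod_congr rfl fun j _ => map_pow _ _ _

lemma uM_Wel' (σ : K ≃ₐ[F] K) (N : ℕ) (ω : Kˣ) :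
    uM σ (Wel σ N ω) * ω ^ N = Wel σ N ω * cpow σ ω N := by
  rw [uM_Wel]; group

lemma uM_algMap (σ : K ≃ₐ[F] K) (f : Fˣ) :
    uM σ (Units.map (algebraMap F K : F →* K) f) = Units.map (algebraMap F K : F →* K) f := by
  ext
  exact σ.commutes (f : F)

lemma key_cN {σ : K ≃ₐ[F] K} {p n : ℕ} (hp : p.Prime) (hn : 1 ≤ n)
    (hG : Nat.card (K ≃ₐ[F] K) = p ^ n)
    (u ω X D : Kˣ) (hω : uM σ u = u * ω ^ p) (hX : uM σ X = X * D)
    (hXp : X ^ p = u ^ (p ^ n) * (Wel σ (p ^ n) ω) ^ p) :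
    cpow σ ω (p ^ n) = D := by
  have hNN' : p ^ n = p ^ (n - 1) * p := by
    conv_lhs => rw [show n = n - 1 + 1 by omega]
    rw [pow_succ]
  set N' := p ^ (n - 1) with hN'
  set W := Wel σ (p ^ n) ω with hW
  set Y := u ^ N' * W with hY
  have hYp : Y ^ p = u ^ (p ^ n) * W ^ p := by
    rw [hY, mul_pow, ← pow_mul, ← hNN']
  set μ := X * Y⁻¹ with hμ
  have hμp : μ ^ p = 1 := by
    rw [hμ, mul_pow, inv_pow, hXp, ← hYp, mul_inv_cancel]
  have hexp : p * p ^ (n - 1) = p ^ n := by rw [hNN', Nat.mul_comm]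
  have hσY : uM σ Y = Y * cpow σ ω (p ^ n) := by
    calc uM σ Y = (u * ω ^ p) ^ N' * uM σ W := by rw [hY, map_mul, map_pow, hω]
      _ = u ^ N' * ω ^ (p ^ n) * uM σ W := by rw [mul_pow, ← pow_mul, hexp]
      _ = u ^ N' * (uM σ W * ω ^ (p ^ n)) := by
          rw [mul_assoc, mul_comm (ω ^ (p ^ n)) _]
      _ = u ^ N' * (W * cpow σ ω (p ^ n)) := by rw [uM_Wel']
      _ = Y * cpow σ ω (p ^ n) := by rw [hY, mul_assoc]
  have hσμ : uM σ μ = μ * (D * (cpow σ ω (p ^ n))⁻¹) := by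
    rw [hμ, map_mul, map_inv, hX, hσY, mul_inv]
    exact mul_mul_mul_comm X D Y⁻¹ (cpow σ ω (p ^ n))⁻¹
  have hfixμ : uM σ μ = μ := root_fixed hp hG μ hμp
  rw [hfixμ] at hσμ
  have h1 : D * (cpow σ ω (p ^ n))⁻¹ = 1 := (left_eq_mul.mp hσμ)
  exact (mul_inv_eq_one.mp h1).symm

end galois


/-- **Exact Sequence Lemma.** With `A = (F^× ∩ K^{×p})/F^{×p}`, the sequence
`1 → A → F^×/F^{×p} → J^G → A` is exact (the second map induced by the inclusion
`F^× → K^×`, the third by the norm); `A = 1` if `ξ_p ∉ F`, while `A = ⟨[a]_F⟩` if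
`ξ_p ∈ F`, in which case the norm map is surjective iff `ξ_p ∈ N_{K/F}(K^×)`.
In particular (i) and (ii) of the accompanying remark hold. -/
theorem statement_13
    (p n : ℕ) (hp : p.Prime) (hn : 1 ≤ n)
    (F K : Type) [Field F] [Field K] [Algebra F K]
    [FiniteDimensional F K] [IsGalois F K]
    (σ : K ≃ₐ[F] K) (hσ : ∀ τ : K ≃ₐ[F] K, τ ∈ Subgroup.zpowers σ)
    (hG : Nat.card (K ≃ₐ[F] K) = p ^ n)
    (Ki : ℕ → IntermediateField F K)
    (hKideg : ∀ i, i ≤ n → Module.finrank F ↥(Ki i) = p ^ i)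
    (a : F)
    (hKum : (∃ ζ : F, IsPrimitiveRoot ζ p) →
      ∃ r : K, r ^ p = algebraMap F K a ∧ IntermediateField.adjoin F {r} = Ki 1) :
    -- exactness at F^×/F^{×p}: the kernel of ε is A = (F^× ∩ K^{×p})/F^{×p}
    (∀ f : Fˣ, cls p (Units.map (algebraMap F K : F →* K) f) = 1 ↔
      ∃ x : K, x ^ p = algebraMap F K (f : F)) ∧
    -- ε takes values in J^G
    (∀ f : Fˣ, cls p (Units.map (algebraMap F K : F →* K) f) ∈
      fixedJ p (⊤ : Subgroup (K ≃ₐ[F] K))) ∧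
    -- the norm map sends J^G into A, i.e. norms of fixed classes lie in F^× ∩ K^{×p}
    (∀ u : Kˣ, cls p u ∈ fixedJ p (⊤ : Subgroup (K ≃ₐ[F] K)) →
      ∃ x : K, x ^ p = algebraMap F K (Algebra.norm F (u : K))) ∧
    -- (i) if [β] ∈ [F^×] then [N_{K/F}(β)]_F = [1]_F
    (∀ u : Kˣ, cls p u ∈ clsOf p (⊥ : IntermediateField F K) →
      ∃ f : F, f ^ p = Algebra.norm F (u : K)) ∧
    -- (ii) exactness at J^G: a fixed class with trivial norm class lies in [F^×]
    (∀ u : Kˣ, cls p u ∈ fixedJ p (⊤ : Subgroup (K ≃ₐ[F] K)) →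
      (∃ f : F, f ^ p = Algebra.norm F (u : K)) →
      cls p u ∈ clsOf p (⊥ : IntermediateField F K)) ∧
    -- if ξ_p ∉ F then A = 1
    ((¬ ∃ ζ : F, IsPrimitiveRoot ζ p) →
      ∀ f : F, (∃ x : K, x ^ p = algebraMap F K f) → ∃ g : F, g ^ p = f) ∧
    -- if ξ_p ∈ F then A = ⟨[a]_F⟩
    ((∃ ζ : F, IsPrimitiveRoot ζ p) →
      ∀ f : Fˣ, ((∃ x : K, x ^ p = algebraMap F K (f : F)) ↔
        ∃ (s : ℕ) (g : F), (f : F) = a ^ s * g ^ p)) ∧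
    -- and then N : J^G → A is surjective iff ξ_p ∈ N_{K/F}(K^×)
    ((∃ ζ : F, IsPrimitiveRoot ζ p) →
      ((∃ ζ : F, IsPrimitiveRoot ζ p ∧ ∃ x : K, Algebra.norm F x = ζ) ↔
        ∀ f : Fˣ, (∃ x : K, x ^ p = algebraMap F K (f : F)) →
          ∃ u : Kˣ, cls p u ∈ fixedJ p (⊤ : Subgroup (K ≃ₐ[F] K)) ∧
            ∃ g : F, Algebra.norm F (u : K) = (f : F) * g ^ p)) := by
  classical
  haveI : NeZero p := ⟨hp.ne_zero⟩
  haveI := Fact.mk hp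
  have hinj : Function.Injective (algebraMap F K) := (algebraMap F K).injective
  have hN : 0 < p ^ n := pow_pos hp.pos n
  have hNN' : p ^ n = p ^ (n - 1) * p := by
    conv_lhs => rw [show n = n - 1 + 1 by omega]
    rw [pow_succ]
  have hNu : ∀ u : Kˣ, ((cpow σ u (p ^ n) : Kˣ) : K)
      = algebraMap F K (Algebra.norm F (u : K)) := by
    intro u
    show ((∏ i ∈ Finset.range (p ^ n), uM (σ ^ i) u : Kˣ) : K) = _
    exact Nu_val hσ hG hN u
  have hnorm0 : ∀ u : Kˣ, Algebra.norm F ((u : K)) ≠ 0 := by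
    intro u h0
    have h := hNu u
    rw [h0, map_zero] at h
    exact Units.ne_zero _ h
  have hfixget : ∀ u : Kˣ, cls p u ∈ fixedJ p (⊤ : Subgroup (K ≃ₐ[F] K)) →
      ∃ ω : Kˣ, uM σ u = u * ω ^ p := by
    intro u hu
    have h1 : galJ p σ (cls p u) = cls p u := hu σ (Subgroup.mem_top σ)
    rw [galJ_cls] at h1
    exact (cls_eq_iff p u (uM σ u)).mp h1.symm
  have hfixmk : ∀ u : Kˣ, (∃ ω : Kˣ, uM σ u = u * ω ^ p) →
      cls p u ∈ fixedJ p (⊤ : Subgroup (K ≃ₐ[F] K)) := by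
    rintro u ⟨ω, hω⟩
    intro τ _
    refine fixJ_all p hσ (cls p u) ?_ τ
    rw [galJ_cls, hω]
    exact ((cls_eq_iff p u (u * ω ^ p)).mpr ⟨ω, rfl⟩).symm
  have hBW : ∀ (u ω : Kˣ), uM σ u = u * ω ^ p →
      cpow σ u (p ^ n) = u ^ (p ^ n) * (Wel σ (p ^ n) ω) ^ p := by
    intro u ω hω
    show (∏ i ∈ Finset.range (p ^ n), uM (σ ^ i) u) = _
    exact norm_eq_W σ p (p ^ n) u ω hω
  have P3 : ∀ u : Kˣ, cls p u ∈ fixedJ p (⊤ : Subgroup (K ≃ₐ[F] K)) →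
      ∃ x : K, x ^ p = algebraMap F K (Algebra.norm F (u : K)) := by
    intro u hu
    obtain ⟨ω, hω⟩ := hfixget u hu
    refine ⟨((u ^ (p ^ (n - 1)) * Wel σ (p ^ n) ω : Kˣ) : K), ?_⟩
    have h2 := hNu u
    rw [hBW u ω hω] at h2
    have h3 : (u ^ (p ^ (n - 1)) * Wel σ (p ^ n) ω) ^ p
        = u ^ (p ^ n) * (Wel σ (p ^ n) ω) ^ p := by
      rw [mul_pow, ← pow_mul, ← hNN']
    rw [← h2, ← h3]
    norm_cast
  have P1 : ∀ f : Fˣ, cls p (Units.map (algebraMap F K : F →* K) f) = 1 ↔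
      ∃ x : K, x ^ p = algebraMap F K (f : F) := by
    intro f
    rw [cls_eq_one_iff]
    constructor
    · rintro ⟨v, hv⟩
      refine ⟨(v : K), ?_⟩
      have h := congrArg Units.val hv
      push_cast at h
      rw [h]
      rfl
    · rintro ⟨x, hx⟩
      have halg0 : algebraMap F K (f : F) ≠ 0 := fun h =>
        f.ne_zero (hinj (by rw [h, map_zero]))
      have hx0 : x ≠ 0 := by
        intro h0
        rw [h0, zero_pow hp.ne_zero] at hx
        exact halg0 hx.symm
      refine ⟨Units.mk0 x hx0, ?_⟩
      ext
      rw [Units.val_pow_eq_pow_val, Units.val_mk0, hx]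
      rfl
  have P2 : ∀ f : Fˣ, cls p (Units.map (algebraMap F K : F →* K) f) ∈
      fixedJ p (⊤ : Subgroup (K ≃ₐ[F] K)) := by
    intro f
    exact hfixmk _ ⟨1, by rw [one_pow, mul_one]; exact uM_algMap σ f⟩
  have P4 : ∀ u : Kˣ, cls p u ∈ clsOf p (⊥ : IntermediateField F K) →
      ∃ f : F, f ^ p = Algebra.norm F (u : K) := by
    intro u hu
    obtain ⟨w, hwmem, hw⟩ := Subgroup.mem_map.mp hu
    have hcls : cls p w = cls p u := hw
    obtain ⟨v, hv⟩ := (cls_eq_iff p w u).mp hcls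
    obtain ⟨g, hg⟩ := IntermediateField.mem_bot.mp hwmem
    refine ⟨g ^ (p ^ (n - 1)) * Algebra.norm F ((v : K)), ?_⟩
    have huval : (u : K) = (w : K) * ((v : K)) ^ p := by
      have := congrArg Units.val hv
      push_cast at this
      exact this
    have hfin : Module.finrank F K = p ^ n := by
      rw [← IsGalois.card_aut_eq_finrank, hG]
    have h1 : Algebra.norm F (u : K)
        = Algebra.norm F ((w : K)) * (Algebra.norm F ((v : K))) ^ p := by
      rw [huval, map_mul, map_pow]
    have h2 : Algebra.norm F ((w : K)) = g ^ (p ^ n) := by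
      rw [← hg, Algebra.norm_algebraMap, hfin]
    rw [h1, h2, mul_pow, ← pow_mul, ← hNN']
  have P5 : ∀ u : Kˣ, cls p u ∈ fixedJ p (⊤ : Subgroup (K ≃ₐ[F] K)) →
      (∃ f : F, f ^ p = Algebra.norm F (u : K)) →
      cls p u ∈ clsOf p (⊥ : IntermediateField F K) := by
    intro u hu hex
    obtain ⟨ω, hω⟩ := hfixget u hu
    obtain ⟨f, hf⟩ := hex
    have hf0 : f ≠ 0 := by
      intro h0
      rw [h0, zero_pow hp.ne_zero] at hf
      exact hnorm0 u hf.symm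
    set X : Kˣ := Units.map (algebraMap F K : F →* K) (Units.mk0 f hf0) with hXdef
    have hXfix : uM σ X = X * 1 := by rw [mul_one]; exact uM_algMap σ _
    have hXp : X ^ p = u ^ (p ^ n) * (Wel σ (p ^ n) ω) ^ p := by
      have h2 := hNu u
      rw [hBW u ω hω] at h2
      ext
      rw [Units.val_pow_eq_pow_val]
      show (algebraMap F K f) ^ p = _
      rw [← map_pow, hf, h2]
    have hcN1 : cpow σ ω (p ^ n) = 1 := key_cN hp hn hG u ω X 1 hω hXfix hXp
    have hcNinv : cpow σ ω⁻¹ (p ^ n) = 1 := by rw [cpow_inv, hcN1, inv_one]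
    obtain ⟨z, hz⟩ := hilbert90_cyclic hσ hG hN ω⁻¹ hcNinv
    set w : Kˣ := u * z ^ p with hwdef
    have hσw : uM σ w = w := by
      rw [hwdef, map_mul, map_pow, hω, hz, mul_pow, inv_pow, mul_mul_mul_comm,
        mul_inv_cancel, mul_one]
    have hσwK : σ ((w : K)) = (w : K) := by
      have := congrArg Units.val hσw
      rwa [uM_apply] at this
    obtain ⟨g, hg⟩ := fixed_elem ((w : K)) (fix_all hσ _ hσwK)
    refine Subgroup.mem_map.mpr ⟨w, ?_, ?_⟩
    · show ((w : K)) ∈ (⊥ : IntermediateField F K)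
      exact IntermediateField.mem_bot.mpr ⟨g, hg⟩
    · show cls p w = cls p u
      refine (cls_eq_iff p w u).mpr ⟨z⁻¹, ?_⟩
      rw [hwdef, inv_pow, mul_assoc, mul_inv_cancel, mul_one]
  have hsetup : ∀ ζ : F, IsPrimitiveRoot ζ p →
      ∃ (r : Kˣ) (t' : ℕ), ((r : K)) ^ p = algebraMap F K a ∧ ¬ p ∣ t' ∧
        σ ((r : K)) = algebraMap F K ζ ^ t' * (r : K) := by
    intro ζ hζ
    obtain ⟨r, hrp, hradj⟩ := hKum ⟨ζ, hζ⟩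
    have hKi1 : Module.finrank F (Ki 1) = p ^ 1 := hKideg 1 hn
    have hr0 : r ≠ 0 := by
      intro h0
      rw [h0, IntermediateField.adjoin_zero] at hradj
      rw [← hradj, IntermediateField.finrank_bot, pow_one] at hKi1
      exact hp.one_lt.ne hKi1
    have hξ : IsPrimitiveRoot (algebraMap F K ζ) p := hζ.map_of_injective hinj
    have hνp : (σ r / r) ^ p = 1 := by
      have h1 : (σ r) ^ p = r ^ p := by
        rw [← map_pow, hrp, AlgEquiv.commutes]
      rw [div_pow, h1, div_self (pow_ne_zero p hr0)]
    obtain ⟨t', _, ht'⟩ := hξ.eq_pow_of_pow_eq_one hνp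
    have hσr : σ r = algebraMap F K ζ ^ t' * r := by
      rw [ht', div_mul_cancel₀ _ hr0]
    have hpt' : ¬ p ∣ t' := by
      intro hdvd
      have h1 : (algebraMap F K ζ) ^ t' = 1 := (hξ.pow_eq_one_iff_dvd t').mpr hdvd
      have h2 : σ r = r := by rw [hσr, h1, one_mul]
      obtain ⟨g, hg⟩ := fixed_elem r (fix_all hσ r h2)
      have h3 : IntermediateField.adjoin F {r} = ⊥ :=
        IntermediateField.adjoin_simple_eq_bot_iff.mpr (IntermediateField.mem_bot.mpr ⟨g, hg⟩)
      rw [h3] at hradj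
      rw [← hradj, IntermediateField.finrank_bot, pow_one] at hKi1
      exact hp.one_lt.ne hKi1
    exact ⟨Units.mk0 r hr0, t', hrp, hpt', hσr⟩
  have P6 : (¬ ∃ ζ : F, IsPrimitiveRoot ζ p) →
      ∀ f : F, (∃ x : K, x ^ p = algebraMap F K f) → ∃ g : F, g ^ p = f := by
    rintro hno f ⟨x, hx⟩
    by_cases hf0 : f = 0
    · exact ⟨0, by rw [zero_pow hp.ne_zero, hf0]⟩
    have hx0 : x ≠ 0 := by
      intro h0
      rw [h0, zero_pow hp.ne_zero] at hx
      exact hf0 (hinj (by rw [← hx, map_zero]))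
    have hμ0 : σ x / x ≠ 0 := div_ne_zero (fun h => hx0 (σ.injective (by rw [h, map_zero]))) hx0
    have hμp : (σ x / x) ^ p = 1 := by
      have h1 : (σ x) ^ p = x ^ p := by
        rw [← map_pow, hx, AlgEquiv.commutes]
      rw [div_pow, h1, div_self (pow_ne_zero p hx0)]
    have hμup : (Units.mk0 (σ x / x) hμ0) ^ p = 1 := by
      ext
      rw [Units.val_pow_eq_pow_val, Units.val_mk0, hμp, Units.val_one]
    obtain ⟨m, hm, hmp⟩ := root_in_F hp hσ hG (Units.mk0 (σ x / x) hμ0) hμup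
    have hm1 : m = 1 := by
      by_contra hne
      have hdvd : orderOf m ∣ p := orderOf_dvd_of_pow_eq_one hmp
      rcases hp.eq_one_or_self_of_dvd _ hdvd with h1 | h1
      · exact hne (orderOf_eq_one_iff.mp h1)
      · exact hno ⟨m, by rw [← h1]; exact IsPrimitiveRoot.orderOf m⟩
    have hσx : σ x = x := by
      have h2 : σ x / x = 1 := by
        rw [Units.val_mk0] at hm
        rw [← hm, hm1, map_one]
      field_simp at h2
      exact h2
    obtain ⟨g, hg⟩ := fixed_elem x (fix_all hσ x hσx)
    refine ⟨g, hinj ?_⟩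
    rw [map_pow, hg, hx]
  have P7 : (∃ ζ : F, IsPrimitiveRoot ζ p) →
      ∀ f : Fˣ, ((∃ x : K, x ^ p = algebraMap F K (f : F)) ↔
        ∃ (s : ℕ) (g : F), (f : F) = a ^ s * g ^ p) := by
    rintro ⟨ζ, hζ⟩ f
    obtain ⟨ru, t', hrp, hpt', hσr⟩ := hsetup ζ hζ
    have hξ : IsPrimitiveRoot (algebraMap F K ζ) p := hζ.map_of_injective hinj
    have hζK0 : (algebraMap F K ζ) ≠ 0 := hξ.ne_zero hp.ne_zero
    set ξu : Kˣ := Units.mk0 (algebraMap F K ζ) hζK0 with hξudef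
    have hξu : IsPrimitiveRoot ξu p := IsPrimitiveRoot.coe_units_iff.mp hξ
    have hordξ : orderOf ξu = p := hξu.eq_orderOf.symm
    constructor
    · rintro ⟨x, hx⟩
      have halg0 : algebraMap F K (f : F) ≠ 0 := fun h =>
        f.ne_zero (hinj (by rw [h, map_zero]))
      have hx0 : x ≠ 0 := by
        intro h0
        rw [h0, zero_pow hp.ne_zero] at hx
        exact halg0 hx.symm
      set xu : Kˣ := Units.mk0 x hx0 with hxudef
      have hμp : (σ x / x) ^ p = 1 := by
        have h1 : (σ x) ^ p = x ^ p := by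
          rw [← map_pow, hx, AlgEquiv.commutes]
        rw [div_pow, h1, div_self (pow_ne_zero p hx0)]
      obtain ⟨t, _, ht⟩ := hξ.eq_pow_of_pow_eq_one hμp
      have hσx : σ x = algebraMap F K ζ ^ t * x := by
        rw [ht, div_mul_cancel₀ _ hx0]
      have ht'0 : ((t' : ZMod p)) ≠ 0 := by
        rw [Ne, ZMod.natCast_eq_zero_iff]
        exact hpt'
      set z : ZMod p := (t : ZMod p) * (t' : ZMod p)⁻¹ with hzdef
      set s : ℕ := z.val with hsdef
      have hsz : ((s : ZMod p)) = z := by rw [hsdef, ZMod.natCast_val, ZMod.cast_id]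
      have hmod : s * t' ≡ t [MOD p] := by
        rw [← ZMod.natCast_eq_natCast_iff]
        push_cast
        rw [hsz, hzdef, mul_assoc, inv_mul_cancel₀ ht'0, mul_one]
      have hσxu : uM σ xu = ξu ^ t * xu := by
        ext
        push_cast
        rw [Units.val_mk0]
        exact hσx
      have hσru : uM σ ru = ξu ^ t' * ru := by
        ext
        push_cast
        rw [Units.val_mk0]
        exact hσr
      have hpow : ξu ^ (t' * s) = ξu ^ t := by
        refine pow_eq_pow_iff_modEq.mpr ?_
        rw [hordξ]
        exact (Nat.mul_comm s t') ▸ hmod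
      set y : Kˣ := xu * (ru ^ s)⁻¹ with hydef
      have hσy : uM σ y = y := by
        rw [hydef, map_mul, map_inv, map_pow, hσxu, hσru, mul_pow, ← pow_mul, hpow, mul_inv,
          mul_mul_mul_comm, mul_inv_cancel, one_mul]
      have hσyK : σ ((y : K)) = (y : K) := by
        have := congrArg Units.val hσy
        rwa [uM_apply] at this
      obtain ⟨g, hg⟩ := fixed_elem ((y : K)) (fix_all hσ _ hσyK)
      refine ⟨s, g, hinj ?_⟩
      rw [map_mul, map_pow, map_pow, ← hx]
      have hxval : x = algebraMap F K g * ((ru : K)) ^ s := by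
        have h1 : xu = y * ru ^ s := by rw [hydef, inv_mul_cancel_right]
        have h2 := congrArg Units.val h1
        push_cast at h2
        rw [Units.val_mk0] at h2
        rw [h2, hg]
      rw [hxval, mul_pow, ← pow_mul, Nat.mul_comm s p, pow_mul, hrp]
      ring
    · rintro ⟨s, g, hfg⟩
      refine ⟨((ru : K)) ^ s * algebraMap F K g, ?_⟩
      rw [mul_pow, ← pow_mul, Nat.mul_comm s p, pow_mul, hrp, hfg, map_mul, map_pow, map_pow]
  have P8 : (∃ ζ : F, IsPrimitiveRoot ζ p) →
      ((∃ ζ : F, IsPrimitiveRoot ζ p ∧ ∃ x : K, Algebra.norm F x = ζ) ↔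
        ∀ f : Fˣ, (∃ x : K, x ^ p = algebraMap F K (f : F)) →
          ∃ u : Kˣ, cls p u ∈ fixedJ p (⊤ : Subgroup (K ≃ₐ[F] K)) ∧
            ∃ g : F, Algebra.norm F (u : K) = (f : F) * g ^ p) := by
    intro hexζ
    constructor
    · rintro ⟨ζ, hζ, x, hNx⟩ f hfA
      obtain ⟨ru, t', hrp, hpt', hσr⟩ := hsetup ζ hζ
      have hζ0 : ζ ≠ 0 := by
        intro h0
        rw [h0] at hζ
        exact (hζ.ne_zero hp.ne_zero) rfl
      have hx0 : x ≠ 0 := by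
        intro h0
        rw [h0, Algebra.norm_zero] at hNx
        exact hζ0 hNx.symm
      set xu : Kˣ := Units.mk0 x hx0 with hxudef
      set ω : Kˣ := xu ^ t' with hωdef
      have hNxu : Algebra.norm F ((xu : K)) = ζ := hNx
      have hcNω : ((cpow σ ω (p ^ n) : Kˣ) : K) = algebraMap F K (ζ ^ t') := by
        rw [hNu ω]
        congr 1
        have hval : ((ω : K)) = x ^ t' := by
          rw [hωdef]
          push_cast
          rw [Units.val_mk0]
        rw [hval, map_pow, hNx]
      have hcppow : cpow σ (ω ^ p) (p ^ n) = 1 := by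
        ext
        rw [cpow_pow, Units.val_pow_eq_pow_val, hcNω, ← map_pow, ← pow_mul, Nat.mul_comm t' p,
          pow_mul, hζ.pow_eq_one, one_pow, map_one, Units.val_one]
      obtain ⟨u, hu⟩ := hilbert90_cyclic hσ hG hN (ω ^ p) hcppow
      have hufix : cls p u ∈ fixedJ p (⊤ : Subgroup (K ≃ₐ[F] K)) := hfixmk u ⟨ω, hu⟩
      obtain ⟨xk, hxk⟩ := P3 u hufix
      set nu : Fˣ := Units.mk0 (Algebra.norm F ((u : K))) (hnorm0 u) with hnudef
      obtain ⟨s, g, hsg⟩ := (P7 hexζ nu).mp ⟨xk, by rw [Units.val_mk0]; exact hxk⟩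
      rw [Units.val_mk0] at hsg
      have ha0 : a ≠ 0 := by
        intro h0
        rw [h0, map_zero] at hrp
        exact (Units.ne_zero ru) ((pow_eq_zero_iff hp.ne_zero).mp hrp)
      have hg0 : g ≠ 0 := by
        intro h0
        rw [h0, zero_pow hp.ne_zero, mul_zero] at hsg
        exact hnorm0 u hsg
      have hps : ¬ p ∣ s := by
        rintro ⟨s₁, rfl⟩
        have hf₀ : a ^ s₁ * g ≠ 0 := mul_ne_zero (pow_ne_zero _ ha0) hg0
        set X : Kˣ := Units.map (algebraMap F K : F →* K) (Units.mk0 (a ^ s₁ * g) hf₀) with hXdef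
        have hXfix : uM σ X = X * 1 := by rw [mul_one]; exact uM_algMap σ _
        have hXp : X ^ p = u ^ (p ^ n) * (Wel σ (p ^ n) ω) ^ p := by
          have h2 := hNu u
          rw [hBW u ω hu] at h2
          have h5 : (a ^ s₁ * g) ^ p = Algebra.norm F ((u : K)) := by
            rw [hsg, mul_pow, ← pow_mul, Nat.mul_comm s₁ p]
          ext
          rw [Units.val_pow_eq_pow_val]
          show (algebraMap F K (a ^ s₁ * g)) ^ p = _
          rw [← map_pow, h5, h2]
        have hcN1 : cpow σ ω (p ^ n) = 1 := key_cN hp hn hG u ω X 1 hu hXfix hXp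
        have h6 : algebraMap F K (ζ ^ t') = 1 := by
          rw [← hcNω, hcN1, Units.val_one]
        have hζt : ζ ^ t' = 1 := hinj (by rw [h6, map_one])
        exact hpt' ((hζ.pow_eq_one_iff_dvd t').mp hζt)
      obtain ⟨s₀, g₀, hfg⟩ := (P7 hexζ f).mp hfA
      have hg₀0 : g₀ ≠ 0 := by
        intro h0
        rw [h0, zero_pow hp.ne_zero, mul_zero] at hfg
        exact f.ne_zero hfg
      have hs0 : (s : ZMod p) ≠ 0 := by
        rw [Ne, ZMod.natCast_eq_zero_iff]
        exact hps
      set k : ℕ := ((s₀ : ZMod p) * (s : ZMod p)⁻¹).val + p * s₀ with hkdef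
      have hk1 : ((k : ZMod p)) * (s : ZMod p) = (s₀ : ZMod p) := by
        rw [hkdef]
        push_cast
        rw [ZMod.natCast_val, ZMod.cast_id, ZMod.natCast_self, zero_mul, add_zero,
          mul_assoc, inv_mul_cancel₀ hs0, mul_one]
      have hs1 : 1 ≤ s := Nat.one_le_iff_ne_zero.mpr (fun h => hps (by rw [h]; exact dvd_zero p))
      have hle : s₀ ≤ k * s := by
        calc s₀ ≤ p * s₀ := Nat.le_mul_of_pos_left s₀ hp.pos
          _ ≤ k := by rw [hkdef]; omega
          _ ≤ k * s := Nat.le_mul_of_pos_right k (by omega)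
      have hmodk : s₀ ≡ k * s [MOD p] := by
        rw [← ZMod.natCast_eq_natCast_iff]
        push_cast
        rw [hk1]
      obtain ⟨m, hm⟩ := (Nat.modEq_iff_dvd' hle).mp hmodk
      have hks : k * s = s₀ + p * m := by omega
      have hclspow : cls p (u ^ k) = (cls p u) ^ k := by
        show QuotientGroup.mk _ = _
        rw [QuotientGroup.mk_pow]
        rfl
      refine ⟨u ^ k, ?_, (a ^ m * g ^ k) / g₀, ?_⟩
      · rw [hclspow]
        exact pow_mem hufix k
      · have hnuk : Algebra.norm F (((u ^ k : Kˣ) : K)) = (a ^ s * g ^ p) ^ k := by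
          rw [Units.val_pow_eq_pow_val, map_pow, hsg]
        have hexpand : (a ^ s * g ^ p) ^ k = a ^ s₀ * (a ^ m * g ^ k) ^ p := by
          rw [mul_pow, ← pow_mul, ← pow_mul, Nat.mul_comm s k, hks, pow_add, mul_pow,
            ← pow_mul, ← pow_mul]
          ring
        rw [hnuk, hfg, hexpand, div_pow]
        field_simp
    · intro hsurj
      obtain ⟨ζ, hζ⟩ := hexζ
      obtain ⟨ru, t', hrp, hpt', hσr⟩ := hsetup ζ hζ
      have ha0 : a ≠ 0 := by
        intro h0
        rw [h0, map_zero] at hrp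
        exact (Units.ne_zero ru) ((pow_eq_zero_iff hp.ne_zero).mp hrp)
      obtain ⟨u, hufix, g, hng⟩ := hsurj (Units.mk0 a ha0) ⟨(ru : K), by
        rw [Units.val_mk0]; exact hrp⟩
      rw [Units.val_mk0] at hng
      obtain ⟨ω, hω⟩ := hfixget u hufix
      have hg0 : g ≠ 0 := by
        intro h0
        rw [h0, zero_pow hp.ne_zero, mul_zero] at hng
        exact hnorm0 u hng
      have hξ : IsPrimitiveRoot (algebraMap F K ζ) p := hζ.map_of_injective hinj
      have hζK0 : (algebraMap F K ζ) ≠ 0 := hξ.ne_zero hp.ne_zero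
      set ξu : Kˣ := Units.mk0 (algebraMap F K ζ) hζK0 with hξudef
      set X : Kˣ := ru * Units.map (algebraMap F K : F →* K) (Units.mk0 g hg0) with hXdef
      have hσru : uM σ ru = ξu ^ t' * ru := by
        ext
        push_cast
        rw [Units.val_mk0]
        exact hσr
      have hσX : uM σ X = X * ξu ^ t' := by
        rw [hXdef, map_mul, uM_algMap, hσru, mul_comm (ξu ^ t') ru, mul_right_comm]
      have hXp : X ^ p = u ^ (p ^ n) * (Wel σ (p ^ n) ω) ^ p := by
        have h2 := hNu u
        rw [hBW u ω hω] at h2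
        have h5 : ((X : K)) ^ p = algebraMap F K (Algebra.norm F ((u : K))) := by
          have hXval : ((X : K)) = (ru : K) * algebraMap F K g := rfl
          rw [hXval, mul_pow, hrp, ← map_pow, ← map_mul, hng]
        ext
        rw [Units.val_pow_eq_pow_val, h5, h2]
      have hcN : cpow σ ω (p ^ n) = ξu ^ t' := key_cN hp hn hG u ω X (ξu ^ t') hω hσX hXp
      have h6 : algebraMap F K (Algebra.norm F ((ω : K))) = algebraMap F K (ζ ^ t') := by
        rw [← hNu ω, hcN, Units.val_pow_eq_pow_val, Units.val_mk0, ← map_pow]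
      refine ⟨ζ ^ t', hζ.pow_of_coprime t' (Nat.Coprime.symm (hp.coprime_iff_not_dvd.mpr hpt')),
        (ω : K), hinj h6⟩
  exact ⟨P1, P2, P3, P4, P5, P6, P7, P8⟩




end PC
end
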